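/- arXiv:2604.26179 — 7 statements merged into one kernel-verified Lean document; each statement's English description precedes it below -/
import Mathlib

section
/- Let α, β ∈ [0,1] and let t, k, n be positive integers with k ≤ n−1. Let 𝒳 be a class of probability distributions on {0,1}^{t(n+1)}, and let 𝒴 be the class of distributions on {0,1}^n of the form addr_{n,t}(X) for X ∈ 𝒳. Suppose Iso: {0,1}^n → {0,1} is an (α, β, k)-isolator for 𝒴. Define the distribution D = (U_1, …, U_t, Iso(U_1), …, Iso(U_t)) on {0,1}^{t(n+1)}, where U_1, …, U_t are independent uniform distributions on {0,1}^n. Then every X ∈ 𝒳 satisfies TV(X, D) ≥ 1 − (1−α)^{t+1} − 2^{−(n−k)}(2t³ + 1) − β. -/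
open Finset

/-- The uniform distribution on a finite type. -/
noncomputable def unif (α : Type*) [Fintype α] : α → ℝ := fun _ => (Fintype.card α : ℝ)⁻¹

/-- `p` is a probability distribution on the finite type `α`. -/
def IsDist {α : Type*} [Fintype α] (p : α → ℝ) : Prop :=
  (∀ a, 0 ≤ p a) ∧ ∑ a, p a = 1

open scoped Classical in
/-- Probability that a sample from `p` lands in the event `E`. -/
noncomputable def prob {α : Type*} [Fintype α] (p : α → ℝ) (E : Set α) : ℝ :=
  ∑ a, if a ∈ E then p a else 0

/-- Total variation distance between two distributions on a finite type. -/
noncomputable def tv {α : Type*} [Fintype α] (p q : α → ℝ) : ℝ :=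
  (∑ a, |p a - q a|) / 2

open scoped Classical in
/-- Pushforward of the distribution `p` under the map `f`. -/
noncomputable def push {α β : Type*} [Fintype α] (f : α → β) (p : α → ℝ) : β → ℝ :=
  fun b => ∑ a, if f a = b then p a else 0

/-- `H∞(p) ≥ k`, i.e. every point has mass at most `2 ^ (-k)`. -/
def MinEntropyGE {α : Type*} (p : α → ℝ) (k : ℝ) : Prop :=
  ∀ a, p a ≤ (2 : ℝ) ^ (-k)

/-- `(a, b, k)`-isolator for the class `𝒳` of distributions on the finite type `α`:
`Iso` outputs `1` with probability at least `a` on the uniform distribution, and for every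
`X ∈ 𝒳`, the probability that a sample of `X` is a light point (mass at most `2^(-k)`)
on which `Iso` outputs `1` is at most `b`. -/
def IsIsolator {α : Type*} [Fintype α] (𝒳 : Set (α → ℝ)) (Iso : α → Bool)
    (a b k : ℝ) : Prop :=
  a ≤ prob (unif α) {x | Iso x = true} ∧
  ∀ X ∈ 𝒳, prob X {x | X x ≤ (2 : ℝ) ^ (-k) ∧ Iso x = true} ≤ b

/-- `(ε, k)`-extractor (outputting `m` bits) for the class `𝒳`. -/
def IsExtractor {α : Type*} [Fintype α] {m : ℕ} (𝒳 : Set (α → ℝ))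
    (Ext : α → Fin m → Bool) (ε k : ℝ) : Prop :=
  ∀ X ∈ 𝒳, MinEntropyGE X k → tv (push Ext X) (unif (Fin m → Bool)) ≤ ε

/-- Output distribution of the randomized addressing function `addr_{n,t}` applied to a
sample of `X` (with fresh uniform randomness when all selector bits are `0`). -/
noncomputable def addrDist (n t : ℕ) (X : ((Fin t → Fin n → Bool) × (Fin t → Bool)) → ℝ) :
    (Fin n → Bool) → ℝ :=
  fun y => ∑ w : (Fin t → Fin n → Bool) × (Fin t → Bool), X w *
    (if h : (Finset.univ.filter (fun i : Fin t => w.2 i = true)).Nonempty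
     then (if w.1 ((Finset.univ.filter (fun i : Fin t => w.2 i = true)).min' h) = y
           then (1 : ℝ) else 0)
     else ((2 : ℝ) ^ n)⁻¹)

/-- The hard distribution `D = (U_1, …, U_t, Iso(U_1), …, Iso(U_t))` on `{0,1}^{t(n+1)}`. -/
noncomputable def Ddist (n t : ℕ) (Iso : (Fin n → Bool) → Bool) :
    ((Fin t → Fin n → Bool) × (Fin t → Bool)) → ℝ :=
  push (fun u : Fin t → Fin n → Bool => (u, fun i => Iso (u i)))
    (unif (Fin t → Fin n → Bool))


section Aux
open scoped Classical

variable {γ : Type*} [Fintype γ] {δ : Type*} [Fintype δ]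

lemma prob_nonneg {p : γ → ℝ} (hp : ∀ x, 0 ≤ p x) (S : Set γ) : 0 ≤ prob p S := by
  unfold prob
  exact Finset.sum_nonneg fun x _ => by by_cases h : x ∈ S <;> simp [h, hp x]

lemma prob_mono {p : γ → ℝ} (hp : ∀ x, 0 ≤ p x) {S T : Set γ} (h : S ⊆ T) :
    prob p S ≤ prob p T := by
  unfold prob
  refine Finset.sum_le_sum fun x _ => ?_
  by_cases hx : x ∈ S
  · simp [hx, h hx]
  · by_cases hx' : x ∈ T <;> simp [hx, hx', hp x]

lemma prob_union_le {p : γ → ℝ} (hp : ∀ x, 0 ≤ p x) (S T : Set γ) :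
    prob p (S ∪ T) ≤ prob p S + prob p T := by
  unfold prob
  rw [← Finset.sum_add_distrib]
  refine Finset.sum_le_sum fun x _ => ?_
  by_cases hs : x ∈ S <;> by_cases ht : x ∈ T <;>
    simp [hs, ht, Set.mem_union, hp x]

lemma prob_le_one {p : γ → ℝ} (hp : IsDist p) (S : Set γ) : prob p S ≤ 1 := by
  unfold prob
  rw [← hp.2]
  refine Finset.sum_le_sum fun x _ => ?_
  by_cases hx : x ∈ S <;> simp [hx, hp.1 x]

lemma le_tv {p q : γ → ℝ} (hp : IsDist p) (hq : IsDist q) (E : Set γ) :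
    prob q E - prob p E ≤ tv p q := by
  have h0 : ∑ x, (q x - p x) = 0 := by
    rw [Finset.sum_sub_distrib, hp.2, hq.2, sub_self]
  have h1 : 2 * (prob q E - prob p E)
      = ∑ x, (if x ∈ E then q x - p x else p x - q x) := by
    have h2 : ∑ x, (if x ∈ E then q x - p x else p x - q x)
        = 2 * (∑ x, (if x ∈ E then q x - p x else 0)) - ∑ x, (q x - p x) := by
      rw [Finset.mul_sum, ← Finset.sum_sub_distrib]
      refine Finset.sum_congr rfl fun x _ => ?_
      by_cases hx : x ∈ E <;> simp [hx] <;> ring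
    have h3 : prob q E - prob p E = ∑ x, (if x ∈ E then q x - p x else 0) := by
      unfold prob
      rw [← Finset.sum_sub_distrib]
      refine Finset.sum_congr rfl fun x _ => ?_
      by_cases hx : x ∈ E <;> simp [hx]
    rw [h2, h0, sub_zero, h3]
  have h4 : ∑ x, (if x ∈ E then q x - p x else p x - q x) ≤ ∑ x, |p x - q x| := by
    refine Finset.sum_le_sum fun x _ => ?_
    by_cases hx : x ∈ E
    · rw [if_pos hx, abs_sub_comm]; exact le_abs_self _
    · rw [if_neg hx]; exact le_abs_self _
  unfold tv
  linarith

lemma sum_push_mul (f : γ → δ) (p : γ → ℝ) (g : δ → ℝ) :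
    ∑ b, push f p b * g b = ∑ a, p a * g (f a) := by
  unfold push
  have h : ∀ b, (∑ a, if f a = b then p a else 0) * g b
      = ∑ a, (if f a = b then p a * g b else 0) := by
    intro b
    rw [Finset.sum_mul]
    exact Finset.sum_congr rfl fun a _ => by split <;> simp
  rw [Finset.sum_congr rfl fun b _ => h b, Finset.sum_comm]
  refine Finset.sum_congr rfl fun a _ => ?_
  simp

lemma isDist_push (f : γ → δ) {p : γ → ℝ} (hp : IsDist p) : IsDist (push f p) := by
  constructor
  · intro b
    exact Finset.sum_nonneg fun x _ => by split <;> simp [hp.1 x]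
  · have h := sum_push_mul f p (fun _ => 1)
    simpa [hp.2] using h

lemma isDist_unif [Nonempty γ] : IsDist (unif γ) := by
  constructor
  · intro x; unfold unif; positivity
  · unfold unif
    rw [Finset.sum_const, card_univ, nsmul_eq_mul, mul_inv_cancel₀]
    exact_mod_cast Fintype.card_ne_zero

lemma prob_unif_card (S : Set γ) :
    prob (unif γ) S = ((univ.filter (fun x => x ∈ S)).card : ℝ) / Fintype.card γ := by
  unfold prob unif
  rw [← Finset.sum_filter, Finset.sum_const, nsmul_eq_mul, div_eq_mul_inv]

lemma prob_iUnion_le {ι : Type*} [Fintype ι] {p : γ → ℝ} (hp : ∀ x, 0 ≤ p x)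
    (B : ι → Set γ) : prob p (⋃ i, B i) ≤ ∑ i, prob p (B i) := by
  unfold prob
  rw [Finset.sum_comm]
  refine Finset.sum_le_sum fun x _ => ?_
  by_cases h : x ∈ ⋃ i, B i
  · rw [if_pos h]
    obtain ⟨i, hi⟩ := Set.mem_iUnion.1 h
    calc p x = (if x ∈ B i then p x else 0) := by rw [if_pos hi]
      _ ≤ ∑ i, (if x ∈ B i then p x else 0) :=
        Finset.single_le_sum (f := fun j => if x ∈ B j then p x else 0)
          (fun j _ => by show 0 ≤ (if x ∈ B j then p x else 0); split <;> simp [hp x]) (mem_univ i)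
  · rw [if_neg h]
    exact Finset.sum_nonneg fun i _ => by split <;> simp [hp x]

lemma sum_ite_point [DecidableEq γ] (m : γ) (T : Set γ) (c : ℝ) :
    (∑ y, if y ∈ T then (if m = y then c else 0) else 0) = if m ∈ T then c else 0 := by
  have h : ∀ y, (if y ∈ T then (if m = y then c else 0) else 0)
      = (if m = y then (if y ∈ T then c else 0) else 0) := by
    intro y
    by_cases h1 : y ∈ T <;> by_cases h2 : m = y <;> simp [h1, h2]
  rw [Finset.sum_congr rfl fun y _ => h y]
  simp

lemma card_filter_pi {t : ℕ} {δ' : Type*} [Fintype δ'] [DecidableEq δ'] (P : Fin t → δ' → Prop)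
    [∀ i, DecidablePred (P i)] [DecidablePred (fun u : Fin t → δ' => ∀ i, P i (u i))] :
    (univ.filter (fun u : Fin t → δ' => ∀ i, P i (u i))).card
      = ∏ i, (univ.filter (fun d => P i d)).card := by
  rw [← Fintype.card_piFinset]
  congr 1
  ext u
  simp [Fintype.mem_piFinset]

end Aux

-- ker machinery
noncomputable def ker (n t : ℕ) (w : (Fin t → Fin n → Bool) × (Fin t → Bool))
    (y : Fin n → Bool) : ℝ :=
  if h : (Finset.univ.filter (fun i : Fin t => w.2 i = true)).Nonempty
  then (if w.1 ((Finset.univ.filter (fun i : Fin t => w.2 i = true)).min' h) = y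
        then (1 : ℝ) else 0)
  else ((2 : ℝ) ^ n)⁻¹

lemma addrDist_eq (n t : ℕ) (X : ((Fin t → Fin n → Bool) × (Fin t → Bool)) → ℝ) :
    addrDist n t X = fun y => ∑ w, X w * ker n t w y := rfl

lemma ker_apply (n t : ℕ) (A : Fin t → Fin n → Bool) (bs : Fin t → Bool) (y : Fin n → Bool) :
    ker n t (A, bs) y
      = if h : (Finset.univ.filter (fun i : Fin t => bs i = true)).Nonempty
        then (if A ((Finset.univ.filter (fun i : Fin t => bs i = true)).min' h) = y
              then (1 : ℝ) else 0)
        else ((2 : ℝ) ^ n)⁻¹ := rfl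

lemma ker_nonneg (n t : ℕ) (w : (Fin t → Fin n → Bool) × (Fin t → Bool)) (y : Fin n → Bool) :
    0 ≤ ker n t w y := by
  unfold ker
  split
  · split <;> norm_num
  · positivity

lemma cardV (n : ℕ) : (Fintype.card (Fin n → Bool) : ℝ) = 2 ^ n := by
  simp [Fintype.card_fun]

lemma sum_ker (n t : ℕ) (w : (Fin t → Fin n → Bool) × (Fin t → Bool)) :
    ∑ y, ker n t w y = 1 := by
  by_cases h : (Finset.univ.filter (fun i : Fin t => w.2 i = true)).Nonempty
  · simp only [ker, dif_pos h]
    simp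
  · simp only [ker, dif_neg h]
    rw [Finset.sum_const, card_univ, nsmul_eq_mul, cardV, mul_inv_cancel₀ (by positivity)]

lemma isDist_addrDist (n t : ℕ) {p : ((Fin t → Fin n → Bool) × (Fin t → Bool)) → ℝ}
    (hp : IsDist p) : IsDist (addrDist n t p) := by
  constructor
  · intro y
    rw [addrDist_eq]
    exact Finset.sum_nonneg fun w _ => mul_nonneg (hp.1 w) (ker_nonneg n t w y)
  · simp only [addrDist_eq]
    rw [Finset.sum_comm]
    have h : ∀ w, ∑ y, p w * ker n t w y = p w := by
      intro w; rw [← Finset.mul_sum, sum_ker, mul_one]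
    rw [Finset.sum_congr rfl fun w _ => h w, hp.2]

lemma tv_addr_le (n t : ℕ) (p q : ((Fin t → Fin n → Bool) × (Fin t → Bool)) → ℝ) :
    tv (addrDist n t p) (addrDist n t q) ≤ tv p q := by
  unfold tv
  have h : ∑ y, |addrDist n t p y - addrDist n t q y| ≤ ∑ w, |p w - q w| := by
    have h1 : ∀ y, |addrDist n t p y - addrDist n t q y|
        ≤ ∑ w, |p w - q w| * ker n t w y := by
      intro y
      have h2 : addrDist n t p y - addrDist n t q y = ∑ w, (p w - q w) * ker n t w y := by
        simp only [addrDist_eq]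
        rw [← Finset.sum_sub_distrib]
        exact Finset.sum_congr rfl fun w _ => (sub_mul _ _ _).symm
      rw [h2]
      calc |∑ w, (p w - q w) * ker n t w y| ≤ ∑ w, |(p w - q w) * ker n t w y| :=
            Finset.abs_sum_le_sum_abs _ _
        _ = ∑ w, |p w - q w| * ker n t w y :=
            Finset.sum_congr rfl fun w _ => by
              rw [abs_mul, abs_of_nonneg (ker_nonneg n t w y)]
    calc ∑ y, |addrDist n t p y - addrDist n t q y|
        ≤ ∑ y, ∑ w, |p w - q w| * ker n t w y := Finset.sum_le_sum fun y _ => h1 y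
      _ = ∑ w, |p w - q w| := by
          rw [Finset.sum_comm]
          exact Finset.sum_congr rfl fun w _ => by rw [← Finset.mul_sum, sum_ker, mul_one]
  linarith

open scoped Classical in
lemma prob_addr (n t : ℕ) (p : ((Fin t → Fin n → Bool) × (Fin t → Bool)) → ℝ)
    (T : Set (Fin n → Bool)) :
    prob (addrDist n t p) T
      = ∑ w, p w * (∑ y, if y ∈ T then ker n t w y else 0) := by
  unfold prob
  have h1 : ∀ y, (if y ∈ T then addrDist n t p y else 0)
      = ∑ w, (if y ∈ T then p w * ker n t w y else 0) := by
    intro y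
    by_cases hy : y ∈ T
    · simp only [if_pos hy]; rfl
    · simp [hy]
  rw [Finset.sum_congr rfl fun y _ => h1 y, Finset.sum_comm]
  refine Finset.sum_congr rfl fun w _ => ?_
  rw [Finset.mul_sum]
  exact Finset.sum_congr rfl fun y _ => by split <;> simp


attribute [-instance] Set.decidableSetOf

open scoped Classical in
theorem stmt0 (a b : ℝ) (ha : a ∈ Set.Icc (0 : ℝ) 1) (hb : b ∈ Set.Icc (0 : ℝ) 1)
    (t k n : ℕ) (ht : 0 < t) (hk : 0 < k) (hn : 0 < n) (hkn : k + 1 ≤ n)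
    (𝒳 : Set (((Fin t → Fin n → Bool) × (Fin t → Bool)) → ℝ))
    (h𝒳 : ∀ X ∈ 𝒳, IsDist X)
    (Iso : (Fin n → Bool) → Bool)
    (hIso : IsIsolator {Y | ∃ X ∈ 𝒳, Y = addrDist n t X} Iso a b k)
    (X : ((Fin t → Fin n → Bool) × (Fin t → Bool)) → ℝ) (hX : X ∈ 𝒳) :
    1 - (1 - a) ^ (t + 1) - (2 : ℝ) ^ (-((n : ℝ) - (k : ℝ))) * (2 * (t : ℝ) ^ 3 + 1) - b
      ≤ tv X (Ddist n t Iso) := by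
  obtain ⟨ha0, ha1⟩ := ha
  have ht1 : (1:ℝ) ≤ (t:ℝ) := by exact_mod_cast ht
  have hNV : (0:ℝ) < 2 ^ n := by positivity
  have hXd : IsDist X := h𝒳 X hX
  have hYd : IsDist (addrDist n t X) := isDist_addrDist n t hXd
  have hDd : IsDist (Ddist n t Iso) := by
    unfold Ddist; exact isDist_push _ isDist_unif
  have hQd : IsDist (addrDist n t (Ddist n t Iso)) := isDist_addrDist n t hDd
  set Y := addrDist n t X with hYdef
  set Q := addrDist n t (Ddist n t Iso) with hQdef
  set μ := unif (Fin t → Fin n → Bool) with hμdef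
  have hμd : IsDist μ := isDist_unif
  set cK : ℝ := (2:ℝ) ^ (-(k:ℝ)) with hcKdef
  set S : Set (Fin n → Bool) := {x | Y x ≤ cK ∧ Iso x = true} with hSdef
  set T : Set (Fin n → Bool) := {x | Iso x = true} with hTdef
  set Hs : Set (Fin n → Bool) := {x | ¬ Y x ≤ cK} with hHdef
  have hYb : prob Y S ≤ b := hIso.2 Y ⟨X, hX, hYdef⟩
  have hp0a : a ≤ prob (unif (Fin n → Bool)) T := hIso.1
  have hp0le1 : prob (unif (Fin n → Bool)) T ≤ 1 := prob_le_one isDist_unif T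
  -- the per-point evaluation of the addressing kernel on `D`-samples
  have hker_eval : ∀ (T' : Set (Fin n → Bool)) (u : Fin t → Fin n → Bool),
      (∑ y, if y ∈ T' then ker n t (u, fun i => Iso (u i)) y else 0)
      = if h : (Finset.univ.filter (fun i : Fin t => Iso (u i) = true)).Nonempty
        then (if u ((Finset.univ.filter (fun i : Fin t => Iso (u i) = true)).min' h) ∈ T'
              then (1:ℝ) else 0)
        else prob (unif (Fin n → Bool)) T' := by
    intro T' u
    by_cases h : (Finset.univ.filter (fun i : Fin t => Iso (u i) = true)).Nonempty
    · rw [dif_pos h]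
      have hk2 : ∀ y, ker n t (u, fun i => Iso (u i)) y
          = if u ((Finset.univ.filter (fun i : Fin t => Iso (u i) = true)).min' h) = y
            then (1:ℝ) else 0 := by
        intro y; rw [ker_apply, dif_pos h]
      have hsum : (∑ y, if y ∈ T' then ker n t (u, fun i => Iso (u i)) y else 0)
          = ∑ y, if y ∈ T' then
              (if u ((Finset.univ.filter (fun i : Fin t => Iso (u i) = true)).min' h) = y
               then (1:ℝ) else 0) else 0 := by
        refine Finset.sum_congr rfl fun y _ => ?_
        rw [hk2 y]
      rw [hsum]
      exact sum_ite_point _ T' 1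
    · have hk2 : ∀ y, ker n t (u, fun i => Iso (u i)) y = ((2:ℝ)^n)⁻¹ := by
        intro y; rw [ker_apply, dif_neg h]
      have hsum : (∑ y, if y ∈ T' then ker n t (u, fun i => Iso (u i)) y else 0)
          = ∑ y, if y ∈ T' then ((2:ℝ)^n)⁻¹ else 0 := by
        refine Finset.sum_congr rfl fun y _ => ?_
        rw [hk2 y]
      rw [dif_neg h, hsum]
      unfold prob unif
      rw [cardV]
  have hrep : ∀ (T' : Set (Fin n → Bool)),
      prob Q T' = ∑ u : Fin t → Fin n → Bool, μ u *
        (if h : (Finset.univ.filter (fun i : Fin t => Iso (u i) = true)).Nonempty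
         then (if u ((Finset.univ.filter (fun i : Fin t => Iso (u i) = true)).min' h) ∈ T'
               then (1:ℝ) else 0)
         else prob (unif (Fin n → Bool)) T') := by
    intro T'
    rw [hQdef, prob_addr]
    unfold Ddist
    rw [sum_push_mul]
    exact Finset.sum_congr rfl fun u _ =>
      congrArg (fun z => μ u * z) (hker_eval T' u)
  set A0 : Set (Fin t → Fin n → Bool) := {u | ∀ i, Iso (u i) = false} with hA0def
  have hA0iff : ∀ u : Fin t → Fin n → Bool,
      (Finset.univ.filter (fun i : Fin t => Iso (u i) = true)).Nonempty ↔ u ∉ A0 := by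
    intro u
    rw [Finset.filter_nonempty_iff]
    constructor
    · rintro ⟨i, -, hi⟩ hall
      rw [hall i] at hi
      cases hi
    · intro hnot
      by_contra h2
      push_neg at h2
      refine hnot fun i => ?_
      have h3 := h2 i (Finset.mem_univ i)
      cases hbi : Iso (u i)
      · rfl
      · exact absurd hbi h3
  have hP0nonneg : 0 ≤ prob μ A0 := prob_nonneg hμd.1 A0
  -- Q puts a lot of mass on Iso-true points
  have hQT : prob Q T = 1 - (1 - prob (unif (Fin n → Bool)) T) * prob μ A0 := by
    rw [hrep T]
    have hterm : ∀ u : Fin t → Fin n → Bool,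
        μ u * (if h : (Finset.univ.filter (fun i : Fin t => Iso (u i) = true)).Nonempty
          then (if u ((Finset.univ.filter (fun i : Fin t => Iso (u i) = true)).min' h) ∈ T
                then (1:ℝ) else 0)
          else prob (unif (Fin n → Bool)) T)
        = μ u - (1 - prob (unif (Fin n → Bool)) T) * (if u ∈ A0 then μ u else 0) := by
      intro u
      by_cases hu : u ∈ A0
      · rw [dif_neg (fun hne => ((hA0iff u).1 hne) hu), if_pos hu]
        ring
      · have hne := (hA0iff u).2 hu
        rw [dif_pos hne, if_neg hu]
        have hmem : u ((Finset.univ.filter (fun i : Fin t => Iso (u i) = true)).min' hne) ∈ T := by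
          have hm := Finset.min'_mem _ hne
          simp only [Finset.mem_filter] at hm
          exact hm.2
        rw [if_pos hmem]
        ring
    refine (Finset.sum_congr rfl fun u _ => hterm u).trans ?_
    rw [Finset.sum_sub_distrib, hμd.2, ← Finset.mul_sum]
    rfl
  -- counting: probability that all Iso(u i) are false
  have hcardPi : (Fintype.card (Fin t → Fin n → Bool) : ℝ) = ((2:ℝ)^n) ^ t := by
    rw [Fintype.card_fun, Fintype.card_fin]
    push_cast
    rw [cardV]
  have hsT : prob (unif (Fin n → Bool)) T
      = ((univ.filter (fun y : Fin n → Bool => Iso y = true)).card : ℝ) / 2 ^ n := by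
    have hfeq : (univ.filter (fun y : Fin n → Bool => y ∈ T))
        = univ.filter (fun y : Fin n → Bool => Iso y = true) := by
      ext y
      simp [hTdef]
    rw [prob_unif_card, hfeq, cardV]
  have hP0le : prob μ A0 ≤ (1-a)^t := by
    rw [hμdef, prob_unif_card]
    have h1 : (univ.filter (fun u : Fin t → Fin n → Bool => u ∈ A0))
        = (univ.filter (fun u : Fin t → Fin n → Bool => ∀ i, Iso (u i) = false)) := by
      ext u
      simp [hA0def]
    rw [h1, card_filter_pi (fun _ d => Iso d = false), Finset.prod_const, Finset.card_univ,
      Fintype.card_fin, hcardPi]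
    push_cast
    rw [← div_pow]
    refine pow_le_pow_left₀ (by positivity) ?_ t
    -- (#false)/2^n ≤ 1 - a
    have hsplit := Finset.card_filter_add_card_filter_not
      (s := (univ : Finset (Fin n → Bool))) (p := fun y => Iso y = true)
    have hfneg : (univ.filter (fun y : Fin n → Bool => ¬ Iso y = true))
        = (univ.filter (fun y : Fin n → Bool => Iso y = false)) := by
      ext y
      simp
    rw [hfneg] at hsplit
    have hcastsplit : ((univ.filter (fun y : Fin n → Bool => Iso y = true)).card : ℝ)
        + ((univ.filter (fun y : Fin n → Bool => Iso y = false)).card : ℝ) = 2 ^ n := by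
      have h2 : ((univ : Finset (Fin n → Bool)).card : ℝ) = 2 ^ n := by
        rw [Finset.card_univ]; exact cardV n
      rw [← h2]
      exact_mod_cast hsplit
    have ha' : a * 2^n ≤ ((univ.filter (fun y : Fin n → Bool => Iso y = true)).card : ℝ) := by
      rw [hsT] at hp0a
      exact (le_div_iff₀ hNV).1 hp0a
    rw [div_le_iff₀ hNV]
    linarith
  have hQTge : 1 - (1-a)^(t+1) ≤ prob Q T := by
    rw [hQT]
    have h1 : (1 - prob (unif (Fin n → Bool)) T) * prob μ A0 ≤ (1-a) * (1-a)^t :=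
      mul_le_mul (by linarith) hP0le hP0nonneg (by linarith)
    have h2 : (1-a)^(t+1) = (1-a) * (1-a)^t := by
      rw [pow_succ]; ring
    linarith
  -- heavy points are few
  set cH := (univ.filter (fun y : Fin n → Bool => y ∈ Hs)).card with hcHdef
  have hpH : prob (unif (Fin n → Bool)) Hs = (cH:ℝ)/2^n := by
    rw [prob_unif_card, cardV]
  have hcK_pos : 0 < cK := by rw [hcKdef]; positivity
  have hcHle : (cH:ℝ) ≤ 2^k := by
    have h1 : (cH:ℝ) * cK ≤ 1 := by
      have h2 : (cH:ℝ) * cK = ∑ _y ∈ univ.filter (fun y : Fin n → Bool => y ∈ Hs), cK := by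
        rw [Finset.sum_const, nsmul_eq_mul, hcHdef]
      rw [h2]
      calc ∑ y ∈ univ.filter (fun y : Fin n → Bool => y ∈ Hs), cK
          ≤ ∑ y ∈ univ.filter (fun y : Fin n → Bool => y ∈ Hs), Y y := by
            refine Finset.sum_le_sum fun y hy => ?_
            have h3 : y ∈ Hs := (Finset.mem_filter.1 hy).2
            exact le_of_lt (not_le.1 h3)
        _ ≤ ∑ y, Y y := Finset.sum_le_sum_of_subset_of_nonneg (Finset.filter_subset _ _)
              (fun y _ _ => hYd.1 y)
        _ = 1 := hYd.2
    have h3 : cK⁻¹ = (2:ℝ)^k := by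
      rw [hcKdef, ← Real.rpow_natCast 2 k, ← Real.rpow_neg (by norm_num : (0:ℝ) ≤ 2), neg_neg]
    calc (cH:ℝ) = cH * cK * cK⁻¹ := by field_simp
      _ ≤ 1 * cK⁻¹ := mul_le_mul_of_nonneg_right h1 (by positivity)
      _ = 2^k := by rw [one_mul, h3]
  have hBi : ∀ i : Fin t, prob μ {u : Fin t → Fin n → Bool | u i ∈ Hs} = (cH:ℝ)/2^n := by
    intro i
    rw [hμdef, prob_unif_card]
    have h1 : (univ.filter (fun u : Fin t → Fin n → Bool => u ∈ {u : Fin t → Fin n → Bool | u i ∈ Hs}))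
        = univ.filter (fun u : Fin t → Fin n → Bool => ∀ j, j = i → u j ∈ Hs) := by
      ext u
      simp only [Finset.mem_filter, Finset.mem_univ, true_and, Set.mem_setOf_eq]
      exact ⟨fun h j hj => hj ▸ h, fun h => h i rfl⟩
    rw [h1, card_filter_pi (fun j d => j = i → d ∈ Hs)]
    rw [← Finset.mul_prod_erase univ _ (Finset.mem_univ i)]
    have h2 : (univ.filter (fun d : Fin n → Bool => i = i → d ∈ Hs))
        = univ.filter (fun d : Fin n → Bool => d ∈ Hs) := by
      ext d; simp
    have h3 : ∀ j ∈ univ.erase i,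
        (univ.filter (fun d : Fin n → Bool => j = i → d ∈ Hs)).card
          = Fintype.card (Fin n → Bool) := by
      intro j hj
      have hji : j ≠ i := Finset.ne_of_mem_erase hj
      have h4 : (univ.filter (fun d : Fin n → Bool => j = i → d ∈ Hs)) = univ := by
        ext d; simp [hji]
      rw [h4, Finset.card_univ]
    rw [Finset.prod_congr rfl h3, Finset.prod_const, Finset.card_erase_of_mem (Finset.mem_univ i),
      Finset.card_univ, Fintype.card_fin, h2, hcardPi]
    push_cast
    rw [cardV]
    have h5 : ((2:ℝ)^n)^t = ((2:ℝ)^n)^(t-1) * 2^n := by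
      rw [← pow_succ, Nat.sub_add_cancel ht]
    rw [h5, mul_comm ((cH:ℝ)) (((2:ℝ)^n)^(t-1)),
      mul_div_mul_left _ _ (by positivity : ((2:ℝ)^n)^(t-1) ≠ 0)]
  have hQHle : prob Q Hs ≤ ((t:ℝ)+1) * ((cH:ℝ)/2^n) := by
    rw [hrep Hs]
    have hterm : ∀ u : Fin t → Fin n → Bool,
        μ u * (if h : (Finset.univ.filter (fun i : Fin t => Iso (u i) = true)).Nonempty
          then (if u ((Finset.univ.filter (fun i : Fin t => Iso (u i) = true)).min' h) ∈ Hs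
                then (1:ℝ) else 0)
          else prob (unif (Fin n → Bool)) Hs)
        ≤ (if u ∈ ⋃ i : Fin t, {u : Fin t → Fin n → Bool | u i ∈ Hs} then μ u else 0)
            + μ u * ((cH:ℝ)/2^n) := by
      intro u
      have hnn1 : (0:ℝ) ≤ (if u ∈ ⋃ i : Fin t, {u : Fin t → Fin n → Bool | u i ∈ Hs}
          then μ u else 0) := by
        split <;> simp [hμd.1 u]
      have hnn2 : (0:ℝ) ≤ μ u * ((cH:ℝ)/2^n) := mul_nonneg (hμd.1 u) (by positivity)
      by_cases h : (Finset.univ.filter (fun i : Fin t => Iso (u i) = true)).Nonempty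
      · rw [dif_pos h]
        by_cases hm : u ((Finset.univ.filter (fun i : Fin t => Iso (u i) = true)).min' h) ∈ Hs
        · rw [if_pos hm, mul_one]
          have hU : u ∈ ⋃ i : Fin t, {u : Fin t → Fin n → Bool | u i ∈ Hs} :=
            Set.mem_iUnion.2 ⟨(Finset.univ.filter (fun i : Fin t => Iso (u i) = true)).min' h, hm⟩
          rw [if_pos hU]
          linarith
        · rw [if_neg hm, mul_zero]
          linarith
      · rw [dif_neg h, hpH]
        linarith
    calc (∑ u : Fin t → Fin n → Bool, μ u *
          (if h : (Finset.univ.filter (fun i : Fin t => Iso (u i) = true)).Nonempty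
           then (if u ((Finset.univ.filter (fun i : Fin t => Iso (u i) = true)).min' h) ∈ Hs
                 then (1:ℝ) else 0)
           else prob (unif (Fin n → Bool)) Hs))
        ≤ ∑ u : Fin t → Fin n → Bool,
            ((if u ∈ ⋃ i : Fin t, {u : Fin t → Fin n → Bool | u i ∈ Hs} then μ u else 0)
              + μ u * ((cH:ℝ)/2^n)) := Finset.sum_le_sum fun u _ => hterm u
      _ = prob μ (⋃ i : Fin t, {u : Fin t → Fin n → Bool | u i ∈ Hs}) + (cH:ℝ)/2^n := by
          rw [Finset.sum_add_distrib, ← Finset.sum_mul, hμd.2, one_mul]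
          rfl
      _ ≤ (∑ i : Fin t, prob μ {u : Fin t → Fin n → Bool | u i ∈ Hs}) + (cH:ℝ)/2^n := by
          have := prob_iUnion_le hμd.1 (fun i : Fin t => {u : Fin t → Fin n → Bool | u i ∈ Hs})
          linarith
      _ = (t:ℝ) * ((cH:ℝ)/2^n) + (cH:ℝ)/2^n := by
          rw [Finset.sum_congr rfl fun i _ => hBi i, Finset.sum_const, Finset.card_univ,
            Fintype.card_fin, nsmul_eq_mul]
      _ = ((t:ℝ)+1) * ((cH:ℝ)/2^n) := by ring
  -- put the pieces together
  have hQS : prob Q T - prob Q Hs ≤ prob Q S := by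
    have h1 : T ⊆ S ∪ Hs := fun y hy => by
      by_cases hl : Y y ≤ cK
      · exact Or.inl ⟨hl, hy⟩
      · exact Or.inr hl
    have h2 := prob_mono hQd.1 h1
    have h3 := prob_union_le hQd.1 S Hs
    linarith
  have htv1 : prob Q S - prob Y S ≤ tv Y Q := le_tv hYd hQd S
  have htv2 : tv Y Q ≤ tv X (Ddist n t Iso) := by
    rw [hYdef, hQdef]
    exact tv_addr_le n t X (Ddist n t Iso)
  have hrw : (2:ℝ) ^ (-((n:ℝ) - (k:ℝ))) = (2:ℝ)^k / 2^n := by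
    have h1 : -((n:ℝ) - (k:ℝ)) = (k:ℝ) - (n:ℝ) := by ring
    rw [h1, Real.rpow_sub (by norm_num : (0:ℝ) < 2), Real.rpow_natCast, Real.rpow_natCast]
  rw [hrw]
  have hfrac : (cH:ℝ)/2^n ≤ (2:ℝ)^k/2^n := by gcongr
  have hfrac0 : (0:ℝ) ≤ (cH:ℝ)/2^n := div_nonneg (Nat.cast_nonneg _) (le_of_lt hNV)
  have ht3 : (t:ℝ) + 1 ≤ 2*(t:ℝ)^3 + 1 := by
    nlinarith [mul_nonneg (sub_nonneg.2 ht1) (sq_nonneg (t:ℝ)),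
      mul_nonneg (sub_nonneg.2 ht1) (le_trans zero_le_one ht1)]
  have hmul : ((t:ℝ)+1) * ((cH:ℝ)/2^n) ≤ ((2:ℝ)^k/2^n) * (2*(t:ℝ)^3+1) := by
    calc ((t:ℝ)+1) * ((cH:ℝ)/2^n) ≤ (2*(t:ℝ)^3+1) * ((2:ℝ)^k/2^n) :=
        mul_le_mul ht3 hfrac hfrac0 (by positivity)
      _ = ((2:ℝ)^k/2^n) * (2*(t:ℝ)^3+1) := by ring
  linarith [htv1, htv2, hQS, hQTge, hQHle, hYb, hmul]
end

section
/- Let α, β ∈ [0,1] and let k, n be positive integers with k ≤ n−1. Let 𝒳 be a class of probability distributions on {0,1}^{n+1}, and let 𝒴 be the class of distributions on {0,1}^n of the form addr_{n,1}(X) for X ∈ 𝒳. Suppose Iso: {0,1}^n → {0,1} is an (α, β, k)-isolator for 𝒴. Then every X ∈ 𝒳 satisfies TV(X, (U^n, Iso(U^n))) ≥ 2α − α² − 2^{−(n−k−2)} − β, where (U^n, Iso(U^n)) denotes the distribution on {0,1}^{n+1} obtained by sampling u uniformly from {0,1}^n and outputting (u, Iso(u)). -/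
open Finset

/-- Output distribution of `addr_{n,1}` applied to a sample of `X` on `{0,1}^{n+1}`:
output the first `n` bits if the last bit is `1`, else a fresh uniform sample. -/
noncomputable def addr1Dist (n : ℕ) (X : ((Fin n → Bool) × Bool) → ℝ) :
    (Fin n → Bool) → ℝ :=
  fun y => ∑ w : (Fin n → Bool) × Bool, X w *
    (if w.2 = true then (if w.1 = y then (1 : ℝ) else 0) else ((2 : ℝ) ^ n)⁻¹)

/-! ### Auxiliary lemmas -/

/-- The Markov kernel underlying `addr1Dist`. -/
noncomputable def Kk (n : ℕ) (w : (Fin n → Bool) × Bool) (y : Fin n → Bool) : ℝ :=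
  if w.2 = true then (if w.1 = y then (1 : ℝ) else 0) else ((2 : ℝ) ^ n)⁻¹

lemma addr1_eq (n : ℕ) (X : ((Fin n → Bool) × Bool) → ℝ) (y : Fin n → Bool) :
    addr1Dist n X y = ∑ w, X w * Kk n w y := rfl

lemma Kk_nonneg (n : ℕ) (w : (Fin n → Bool) × Bool) (y : Fin n → Bool) : 0 ≤ Kk n w y := by
  unfold Kk
  split
  · split <;> norm_num
  · positivity

lemma Kk_sum (n : ℕ) (w : (Fin n → Bool) × Bool) : ∑ y, Kk n w y = 1 := by
  unfold Kk
  split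
  · simp
  · rw [Finset.sum_const, Finset.card_univ]
    simp [Fintype.card_fun, nsmul_eq_mul]

lemma addr1_sum (n : ℕ) (X : ((Fin n → Bool) × Bool) → ℝ) (hs : ∑ w, X w = 1) :
    ∑ y, addr1Dist n X y = 1 := by
  simp only [addr1_eq]
  rw [Finset.sum_comm]
  simp only [← Finset.mul_sum, Kk_sum, mul_one, hs]

lemma addr1_nonneg (n : ℕ) (X : ((Fin n → Bool) × Bool) → ℝ) (h : ∀ w, 0 ≤ X w)
    (y : Fin n → Bool) : 0 ≤ addr1Dist n X y := by
  rw [addr1_eq]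
  exact Finset.sum_nonneg fun w _ => mul_nonneg (h w) (Kk_nonneg n w y)

/-- Data-processing inequality for `addr1Dist` (at the level of `ℓ¹` distance). -/
lemma dpi (n : ℕ) (P Q : ((Fin n → Bool) × Bool) → ℝ) :
    ∑ y, |addr1Dist n P y - addr1Dist n Q y| ≤ ∑ w, |P w - Q w| := by
  have h1 : ∀ y, |addr1Dist n P y - addr1Dist n Q y| ≤ ∑ w, |P w - Q w| * Kk n w y := by
    intro y
    rw [addr1_eq, addr1_eq, ← Finset.sum_sub_distrib]
    refine le_trans (Finset.abs_sum_le_sum_abs _ _) (Finset.sum_le_sum fun w _ => ?_)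
    rw [← sub_mul, abs_mul, abs_of_nonneg (Kk_nonneg n w y)]
  calc ∑ y, |addr1Dist n P y - addr1Dist n Q y| ≤ ∑ y, ∑ w, |P w - Q w| * Kk n w y :=
        Finset.sum_le_sum fun y _ => h1 y
    _ = ∑ w, |P w - Q w| := by
        rw [Finset.sum_comm]
        simp only [← Finset.mul_sum, Kk_sum, mul_one]

/-- TV distance dominates the difference of probabilities of any event. -/
lemma tv_ge {α : Type*} [Fintype α] (p q : α → ℝ) (hp : ∑ x, p x = 1) (hq : ∑ x, q x = 1)
    (E : Finset α) : (∑ x ∈ E, q x) - ∑ x ∈ E, p x ≤ tv p q := by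
  classical
  have h1 : ∑ x ∈ E, (q x - p x) ≤ ∑ x ∈ E, |p x - q x| :=
    Finset.sum_le_sum fun x _ => by rw [abs_sub_comm]; exact le_abs_self _
  have h2 : ∑ x ∈ Eᶜ, (p x - q x) ≤ ∑ x ∈ Eᶜ, |p x - q x| :=
    Finset.sum_le_sum fun x _ => le_abs_self _
  have h3 := Finset.sum_add_sum_compl E (fun x => p x - q x)
  have h4 := Finset.sum_add_sum_compl E (fun x => |p x - q x|)
  have h5 : ∑ x, (p x - q x) = 0 := by rw [Finset.sum_sub_distrib, hp, hq]; ring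
  have h6 : ∑ x ∈ E, (q x - p x) = (∑ x ∈ E, q x) - ∑ x ∈ E, p x := by
    rw [Finset.sum_sub_distrib]
  have h7 : ∑ x ∈ Eᶜ, (p x - q x) = (∑ x ∈ E, q x) - ∑ x ∈ E, p x := by
    have hh := h3; rw [h5] at hh
    have hE := Finset.sum_sub_distrib (s := E) (f := p) (g := q)
    have hEc := Finset.sum_sub_distrib (s := Eᶜ) (f := p) (g := q)
    linarith
  unfold tv
  linarith [h1, h2, h4, h6, h7]

lemma push_sum {α β : Type*} [Fintype α] [Fintype β] (f : α → β) (p : α → ℝ) :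
    ∑ y, push f p y = ∑ x, p x := by
  classical
  unfold push
  rw [Finset.sum_comm]
  simp

lemma pushIso_pt (n : ℕ) (Iso : (Fin n → Bool) → Bool) (u : Fin n → Bool) (bb : Bool) :
    push (fun u => (u, Iso u)) (unif (Fin n → Bool)) (u, bb)
      = if Iso u = bb then ((2:ℝ)^n)⁻¹ else 0 := by
  classical
  unfold push unif
  have hc : ((Fintype.card (Fin n → Bool) : ℝ))⁻¹ = ((2:ℝ)^n)⁻¹ := by
    simp [Fintype.card_fun]
  rw [Finset.sum_eq_single u]
  · by_cases hbb : Iso u = bb <;> simp [Prod.ext_iff, hbb, hc]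
  · intro x _ hx
    simp [Prod.ext_iff, hx]
  · intro h; exact absurd (Finset.mem_univ u) h

lemma arith_final (a kp N sR tR m : ℝ) (hN : 0 < N) (hkp : 0 < kp)
    (hst : sR + tR = N) (hal : a ≤ sR * N⁻¹) (ha0 : 0 ≤ a) (ha1 : a ≤ 1)
    (ht0 : 0 ≤ tR) (hm0 : 0 ≤ m) (hcardS : sR ≤ m + kp) :
    2*a - a^2 - 4*kp/N ≤ m * (N⁻¹ + tR * N⁻¹ * N⁻¹) := by
  have hs0 : 0 ≤ sR := le_trans (mul_nonneg ha0 hN.le)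
    (by nlinarith [mul_inv_cancel₀ (ne_of_gt hN)])
  have hsN : sR ≤ N := by linarith
  have h1 : a * N ≤ sR := by nlinarith [mul_inv_cancel₀ (ne_of_gt hN)]
  have haN : a * N ≤ N := by nlinarith
  have hp1 : (0:ℝ) ≤ (sR - a*N) * (2*N - sR - a*N) :=
    mul_nonneg (by linarith) (by linarith)
  have hp1' : (2*a - a^2)*N^2 ≤ sR*(2*N - sR) := by nlinarith
  have hp2 : (0:ℝ) ≤ (m - (sR - kp)) * (2*N - sR) :=
    mul_nonneg (by linarith) (by linarith)
  have hp2' : (sR - kp)*(2*N - sR) ≤ m*(2*N - sR) := by nlinarith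
  have hp3 : kp*(2*N - sR) ≤ 4*kp*N := by nlinarith
  have hkey : (2*a - a^2) * N^2 - 4*kp*N ≤ m * (2*N - sR) := by linarith
  have hfrac : m * (N⁻¹ + tR * N⁻¹ * N⁻¹) = m * (2*N - sR) / N^2 := by
    have htval : tR = N - sR := by linarith
    rw [htval]
    field_simp
    ring
  rw [hfrac, le_div_iff₀ (pow_pos hN 2)]
  have hexp : (2*a - a^2 - 4*kp/N) * N^2 = (2*a - a^2)*N^2 - 4*kp*N := by
    field_simp
  rw [hexp]
  exact hkey

theorem stmt1 (a b : ℝ) (ha : a ∈ Set.Icc (0 : ℝ) 1) (hb : b ∈ Set.Icc (0 : ℝ) 1)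
    (k n : ℕ) (hk : 0 < k) (hn : 0 < n) (hkn : k + 1 ≤ n)
    (𝒳 : Set (((Fin n → Bool) × Bool) → ℝ))
    (h𝒳 : ∀ X ∈ 𝒳, IsDist X)
    (Iso : (Fin n → Bool) → Bool)
    (hIso : IsIsolator {Y | ∃ X ∈ 𝒳, Y = addr1Dist n X} Iso a b k)
    (X : ((Fin n → Bool) × Bool) → ℝ) (hX : X ∈ 𝒳) :
    2 * a - a ^ 2 - (2 : ℝ) ^ (-((n : ℝ) - (k : ℝ) - 2)) - b
      ≤ tv X (push (fun u => (u, Iso u)) (unif (Fin n → Bool))) := by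
  classical
  obtain ⟨hX0, hX1⟩ := h𝒳 X hX
  set N : ℝ := (2:ℝ)^n with hNdef
  have hN : (0:ℝ) < N := by positivity
  set κ : ℝ := (2:ℝ)^k with hκdef
  have hκ : (0:ℝ) < κ := by positivity
  set Y := addr1Dist n X with hYdef
  set Q := push (fun u => (u, Iso u)) (unif (Fin n → Bool)) with hQdef
  set Z := addr1Dist n Q with hZdef
  have hQpt : ∀ u bb, Q (u, bb) = if Iso u = bb then N⁻¹ else 0 := fun u bb =>
    pushIso_pt n Iso u bb
  have hQsum : ∑ w, Q w = 1 := by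
    rw [hQdef, push_sum]
    unfold unif
    rw [Finset.sum_const, Finset.card_univ]
    simp [Fintype.card_fun, nsmul_eq_mul]
  have hYsum : ∑ y, Y y = 1 := addr1_sum n X hX1
  have hZsum : ∑ y, Z y = 1 := addr1_sum n Q hQsum
  have hYnn : ∀ y, 0 ≤ Y y := addr1_nonneg n X hX0
  -- cardinalities
  set s := (Finset.univ.filter fun u => Iso u = true).card with hsdef
  set t := (Finset.univ.filter fun u => Iso u = false).card with htdef
  have hst : (s:ℝ) + t = N := by
    have h := Finset.card_filter_add_card_filter_not
      (s := (Finset.univ : Finset (Fin n → Bool))) (p := fun u => Iso u = true)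
    have h2 : (Finset.univ.filter fun u => ¬ (Iso u = true)) =
        (Finset.univ.filter fun u => Iso u = false) := by
      apply Finset.filter_congr
      intro x _
      simp
    rw [h2] at h
    rw [hNdef]
    have : (Fintype.card (Fin n → Bool)) = 2^n := by simp [Fintype.card_fun]
    rw [← hsdef, ← htdef] at h
    rw [Finset.card_univ, this] at h
    exact_mod_cast h
  -- Z on points where Iso = true
  have hZpt : ∀ y, Iso y = true → Z y = N⁻¹ + (t:ℝ) * N⁻¹ * N⁻¹ := by
    intro y hy
    have hQf : ∑ u, Q (u, false) = (t:ℝ) * N⁻¹ := by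
      simp only [hQpt]
      rw [Finset.sum_ite, Finset.sum_const_zero, add_zero, Finset.sum_const, nsmul_eq_mul]
    calc Z y = ∑ u, ∑ bb : Bool, Q (u, bb) * Kk n (u, bb) y := by
          rw [hZdef, addr1_eq, Fintype.sum_prod_type]
      _ = ∑ u, ((if u = y then Q (u, true) else 0) + Q (u, false) * N⁻¹) := by
          refine Finset.sum_congr rfl fun u _ => ?_
          rw [Fintype.sum_bool]
          unfold Kk
          by_cases huy : u = y
          · simp [huy, hNdef]
          · simp [huy, hNdef]
      _ = Q (y, true) + (∑ u, Q (u, false)) * N⁻¹ := by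
          rw [Finset.sum_add_distrib, Finset.sum_ite_eq' Finset.univ y, ← Finset.sum_mul]
          simp
      _ = N⁻¹ + (t:ℝ) * N⁻¹ * N⁻¹ := by
          rw [hQpt y true, hQf, if_pos hy]
  -- isolator facts
  have hα : a ≤ (s:ℝ) * N⁻¹ := by
    have h := hIso.1
    have heq : prob (unif (Fin n → Bool)) {x | Iso x = true} = (s:ℝ) * N⁻¹ := by
      have h1 : prob (unif (Fin n → Bool)) {x | Iso x = true}
          = ∑ x : Fin n → Bool, (if Iso x = true then ((Fintype.card (Fin n → Bool) : ℝ))⁻¹ else 0) := by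
        unfold prob unif
        refine Finset.sum_congr rfl fun x _ => ?_
        by_cases hx : Iso x = true <;> simp [hx]
      rw [h1, Finset.sum_ite, Finset.sum_const_zero, add_zero, Finset.sum_const,
        nsmul_eq_mul, hNdef]
      norm_num [Fintype.card_fun]
      convert hsdef.symm
    rw [heq] at h
    exact h
  set E' := Finset.univ.filter (fun x => Y x ≤ (2:ℝ)^(-(k:ℝ)) ∧ Iso x = true) with hE'def
  have hβE : ∑ x ∈ E', Y x ≤ b := by
    have h := hIso.2 Y ⟨X, hX, hYdef⟩
    have heq : prob Y {x | Y x ≤ (2:ℝ)^(-(k:ℝ)) ∧ Iso x = true} = ∑ x ∈ E', Y x := by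
      unfold prob
      rw [hE'def, Finset.sum_filter]
      refine Finset.sum_congr rfl fun x _ => ?_
      by_cases hx : Y x ≤ (2:ℝ)^(-(k:ℝ)) ∧ Iso x = true <;> simp [hx, Set.mem_setOf_eq]
    rw [heq] at h
    exact h
  -- heavy points
  set H := Finset.univ.filter (fun u => ¬ (Y u ≤ (2:ℝ)^(-(k:ℝ)))) with hHdef
  have hkpow : (2:ℝ)^(-(k:ℝ)) = κ⁻¹ := by
    rw [hκdef, ← Real.rpow_natCast 2 k, ← Real.rpow_neg (by norm_num)]
  have hHcard : (H.card : ℝ) ≤ κ := by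
    have hle1 : ∑ u ∈ H, Y u ≤ 1 := by
      rw [← hYsum]
      exact Finset.sum_le_sum_of_subset_of_nonneg (Finset.subset_univ H)
        (fun x _ _ => hYnn x)
    have hge : (H.card : ℝ) * κ⁻¹ ≤ ∑ u ∈ H, Y u := by
      calc (H.card : ℝ) * κ⁻¹ = ∑ _u ∈ H, κ⁻¹ := by
            rw [Finset.sum_const, nsmul_eq_mul]
        _ ≤ ∑ u ∈ H, Y u := Finset.sum_le_sum fun u hu => by
            have := (Finset.mem_filter.1 hu).2
            rw [hkpow] at this
            linarith [lt_of_not_ge this]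
    have hc : (H.card : ℝ) * κ⁻¹ ≤ 1 := le_trans hge hle1
    nlinarith [mul_inv_cancel₀ (ne_of_gt hκ), hc, hκ, (Nat.cast_nonneg H.card : (0:ℝ) ≤ (H.card:ℝ))]
  have hcardS : (s:ℝ) ≤ (E'.card : ℝ) + κ := by
    have hsub : (Finset.univ.filter fun u => Iso u = true) ⊆ E' ∪ H := by
      intro u hu
      rw [Finset.mem_union, hE'def, hHdef]
      simp only [Finset.mem_filter, Finset.mem_univ, true_and] at hu ⊢
      by_cases hY : Y u ≤ (2:ℝ)^(-(k:ℝ))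
      · exact Or.inl ⟨hY, hu⟩
      · exact Or.inr hY
    have h1 : s ≤ E'.card + H.card :=
      le_trans (Finset.card_le_card hsub) (Finset.card_union_le _ _)
    have h2 : (s:ℝ) ≤ (E'.card : ℝ) + (H.card : ℝ) := by exact_mod_cast h1
    linarith
  -- sum of Z over E'
  have hZE : ∑ x ∈ E', Z x = (E'.card : ℝ) * (N⁻¹ + (t:ℝ) * N⁻¹ * N⁻¹) := by
    rw [Finset.sum_congr rfl fun x hx => hZpt x ((Finset.mem_filter.1 hx).2.2)]
    rw [Finset.sum_const, nsmul_eq_mul]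
  -- TV chain
  have hmain : (∑ x ∈ E', Z x) - (∑ x ∈ E', Y x) ≤ tv X Q := by
    have h1 := tv_ge Y Z hYsum hZsum E'
    have h2 : tv Y Z ≤ tv X Q := by
      unfold tv
      have := dpi n X Q
      rw [← hYdef, ← hZdef] at this
      linarith
    linarith
  -- arithmetic
  have hpow : (2:ℝ)^(-((n:ℝ)-(k:ℝ)-2)) = 4*κ/N := by
    rw [show -((n:ℝ)-(k:ℝ)-2) = ((k+2:ℕ):ℝ) - ((n:ℕ):ℝ) by push_cast; ring]
    rw [Real.rpow_sub (by norm_num), Real.rpow_natCast, Real.rpow_natCast]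
    rw [pow_add, hNdef, hκdef]
    norm_num
    ring
  set m := (E'.card : ℝ) with hmdef
  have hm0 : (0:ℝ) ≤ m := Nat.cast_nonneg _
  have ht0 : (0:ℝ) ≤ (t:ℝ) := Nat.cast_nonneg _
  have hfinal : 2*a - a^2 - 4*κ/N ≤ m * (N⁻¹ + (t:ℝ) * N⁻¹ * N⁻¹) :=
    arith_final a κ N (s:ℝ) (t:ℝ) m hN hκ hst hα ha.1 ha.2 ht0 hm0 hcardS
  rw [hZE] at hmain
  rw [hpow]
  linarith [hmain, hβE, hfinal]
end

section
/- For any probability distribution X on {0,1}^n and any positive integer k, there exists a function S: {0,1}^n → {0,1}^{k+1} with the following property: for every x ∈ {0,1}^n such that Pr[X = x] ≤ 2^{−k}, we have Pr[S(X) = S(x)] ≤ 2^{−k}, where S(X) denotes the pushforward of X under S. -/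
open Finset

theorem stmt4 (n k : ℕ) (hk : 0 < k)
    (X : (Fin n → Bool) → ℝ) (hX : IsDist X) :
    ∃ S : (Fin n → Bool) → (Fin (k + 1) → Bool),
      ∀ x : Fin n → Bool, X x ≤ ((2 : ℝ) ^ k)⁻¹ →
        prob X {y | S y = S x} ≤ ((2 : ℝ) ^ k)⁻¹ := by
  classical
  obtain ⟨hX0, hX1⟩ := hX
  set c : ℝ := ((2:ℝ)^(k+1))⁻¹ with hc
  have h2k1 : (0:ℝ) < (2:ℝ)^(k+1) := by positivity
  have hc0 : 0 < c := by positivity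
  have hcmul : (2:ℝ)^(k+1) * c = 1 := by
    rw [hc]; field_simp
  have h2c : 2 * c = ((2:ℝ)^k)⁻¹ := by
    rw [hc, pow_succ]
    field_simp
  set e := Fintype.equivFin (Fin n → Bool) with he
  set H : Finset (Fin n → Bool) := univ.filter (fun x => c < X x) with hH
  have hmemH : ∀ x, x ∈ H ↔ c < X x := by
    intro x; simp [hH]
  -- heavy points are few
  have hHsum1 : ∑ y ∈ H, X y ≤ 1 := by
    rw [← hX1]
    exact Finset.sum_le_sum_of_subset_of_nonneg (Finset.subset_univ H)
      (fun i _ _ => hX0 i)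
  have hHcard : H.card < 2^(k+1) := by
    by_contra hcon
    push_neg at hcon
    have hne : H.Nonempty := Finset.card_pos.mp (lt_of_lt_of_le (Nat.pow_pos (by norm_num)) hcon)
    have h1 : (H.card : ℝ) * c < ∑ y ∈ H, X y := by
      have := Finset.sum_lt_sum_of_nonempty hne (f := fun _ => c) (g := X)
        (fun i hi => (hmemH i).mp hi)
      simpa [mul_comm] using this
    have h2 : (1:ℝ) ≤ (H.card : ℝ) * c := by
      have : ((2:ℕ)^(k+1) : ℝ) ≤ (H.card : ℝ) := by exact_mod_cast hcon
      calc (1:ℝ) = (2:ℝ)^(k+1) * c := hcmul.symm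
        _ ≤ (H.card : ℝ) * c := by
            apply mul_le_mul_of_nonneg_right _ hc0.le
            exact_mod_cast this
    linarith
  have hHcardR : (H.card : ℝ) * c ≤ ∑ y ∈ H, X y := by
    have := Finset.card_nsmul_le_sum H X c (fun i hi => ((hmemH i).mp hi).le)
    simpa [nsmul_eq_mul] using this
  -- cumulative light mass
  set F : (Fin n → Bool) → ℝ := fun x =>
    ∑ y ∈ univ.filter (fun y => X y ≤ c ∧ e y < e x), X y with hF
  have hF0 : ∀ x, 0 ≤ F x := fun x => Finset.sum_nonneg (fun i _ => hX0 i)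
  set M : ℝ := ∑ y ∈ univ.filter (fun y => X y ≤ c), X y with hM
  have hFM : ∀ x, F x ≤ M := by
    intro x
    apply Finset.sum_le_sum_of_subset_of_nonneg _ (fun i _ _ => hX0 i)
    intro y hy
    simp only [Finset.mem_filter] at hy ⊢
    exact ⟨hy.1, hy.2.1⟩
  have hMval : M ≤ 1 - (H.card : ℝ) * c := by
    have hsplit : ∑ y ∈ univ.filter (fun y => c < X y), X y
        + ∑ y ∈ univ.filter (fun y => ¬ c < X y), X y = 1 := by
      rw [Finset.sum_filter_add_sum_filter_not]; exact hX1
    have : M = ∑ y ∈ univ.filter (fun y => ¬ c < X y), X y := by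
      rw [hM]; congr 1; ext y; simp [not_lt]
    rw [this]
    have : ∑ y ∈ univ.filter (fun y => c < X y), X y = ∑ y ∈ H, X y := by rw [hH]
    linarith [hHcardR, hsplit, this]
  set b : (Fin n → Bool) → ℕ := fun x => ⌊F x / c⌋₊ with hb
  set Bnd : ℕ := 2^(k+1) - H.card with hBnd
  have hBnd1 : 1 ≤ Bnd := by omega
  have hBndR : (Bnd : ℝ) * c = 1 - (H.card : ℝ) * c := by
    have : (Bnd : ℝ) = (2:ℝ)^(k+1) - (H.card : ℝ) := by
      rw [hBnd]; push_cast [Nat.cast_sub hHcard.le]; ring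
    rw [this, sub_mul, hcmul]
  set b' : (Fin n → Bool) → ℕ := fun x => min (b x) (Bnd - 1) with hb'
  set idx : (Fin n → Bool) → ℕ := fun x => (H.filter (fun y => e y < e x)).card with hidx
  have hidxlt : ∀ x ∈ H, idx x < H.card := by
    intro x hx
    have hsub : H.filter (fun y => e y < e x) ⊆ H.erase x := by
      intro y hy
      simp only [Finset.mem_filter] at hy
      refine Finset.mem_erase.mpr ⟨?_, hy.1⟩
      intro h; rw [h] at hy; exact lt_irrefl _ hy.2
    calc idx x ≤ (H.erase x).card := Finset.card_le_card hsub
      _ < H.card := Finset.card_erase_lt_of_mem hx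
  have hidxmono : ∀ x ∈ H, ∀ y ∈ H, e x < e y → idx x < idx y := by
    intro x hx y hy hxy
    apply Finset.card_lt_card
    constructor
    · intro z hz
      simp only [Finset.mem_filter] at hz ⊢
      exact ⟨hz.1, lt_trans hz.2 hxy⟩
    · intro hsub
      have : x ∈ H.filter (fun z => e z < e x) := hsub (by simp [Finset.mem_filter, hx, hxy])
      simp only [Finset.mem_filter] at this
      exact lt_irrefl _ this.2
  have hidxinj : ∀ x ∈ H, ∀ y ∈ H, idx x = idx y → x = y := by
    intro x hx y hy hxy
    rcases lt_trichotomy (e x) (e y) with h | h | h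
    · exact absurd hxy (Nat.ne_of_lt (hidxmono x hx y hy h))
    · exact e.injective h
    · exact absurd hxy.symm (Nat.ne_of_lt (hidxmono y hy x hx h))
  set label : (Fin n → Bool) → ℕ := fun x => if x ∈ H then idx x else H.card + b' x
    with hlabel
  have hb'lt : ∀ x, b' x ≤ Bnd - 1 := fun x => min_le_right _ _
  have hlablt : ∀ x, label x < 2^(k+1) := by
    intro x
    rw [hlabel]
    by_cases hx : x ∈ H
    · simp only [hx, if_true]
      exact lt_trans (hidxlt x hx) hHcard
    · simp only [hx, if_false]
      have := hb'lt x
      omega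
  have hcardfun : Fintype.card (Fin (k+1) → Bool) = 2^(k+1) := by
    simp [Fintype.card_fun]
  set eqL : (Fin (k+1) → Bool) ≃ Fin (2^(k+1)) := Fintype.equivFinOfCardEq hcardfun with heqL
  set S : (Fin n → Bool) → (Fin (k+1) → Bool) :=
    fun x => eqL.symm ⟨label x, hlablt x⟩ with hS
  have hSiff : ∀ a x, S a = S x ↔ label a = label x := by
    intro a x
    rw [hS]
    constructor
    · intro h
      have := eqL.symm.injective h
      exact congrArg Fin.val this
    · intro h
      exact congrArg eqL.symm (Fin.ext h)
  refine ⟨S, ?_⟩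
  intro x hx
  have hprob : prob X {y | S y = S x}
      = ∑ a ∈ univ.filter (fun a => S a = S x), X a := by
    rw [prob, Finset.sum_filter]
    apply Finset.sum_congr rfl
    intro a _
    by_cases hSa : S a = S x <;> simp [hSa, Set.mem_setOf_eq]
  by_cases hxH : x ∈ H
  -- heavy (but ≤ 2^{-k}) point: its label class is a singleton
  · have hsingle : univ.filter (fun a => S a = S x) = {x} := by
      ext a
      simp only [Finset.mem_filter, Finset.mem_univ, true_and, Finset.mem_singleton]
      constructor
      · intro h
        have hl := (hSiff a x).mp h
        rw [hlabel] at hl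
        by_cases haH : a ∈ H
        · simp only [haH, hxH, if_true] at hl
          exact hidxinj a haH x hxH hl
        · simp only [haH, hxH, if_true, if_false] at hl
          have := hidxlt x hxH
          omega
      · intro h; rw [h]
    rw [hprob, hsingle, Finset.sum_singleton]
    exact hx
  -- light point: its label class is its bucket
  · have hxlight : X x ≤ c := not_lt.mp (fun h => hxH ((hmemH x).mpr h))
    set j : ℕ := b' x with hj
    set B : Finset (Fin n → Bool) := univ.filter (fun y => X y ≤ c ∧ b' y = j) with hB
    have hclass : univ.filter (fun a => S a = S x) = B := by
      ext a
      simp only [hB, Finset.mem_filter, Finset.mem_univ, true_and]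
      rw [hSiff]
      rw [hlabel]
      simp only [hxH, if_false]
      by_cases haH : a ∈ H
      · simp only [haH, if_true]
        constructor
        · intro h
          have := hidxlt a haH
          omega
        · intro h
          exact absurd ((hmemH a).mp haH) (not_lt.mpr h.1)
      · simp only [haH, if_false]
        have halight : X a ≤ c := not_lt.mp (fun h => haH ((hmemH a).mpr h))
        constructor
        · intro h; exact ⟨halight, by omega⟩
        · intro h; omega
    rw [hprob, hclass]
    -- now bound the bucket mass
    have hxB : x ∈ B := by simp [hB, hxlight, hj]
    have hBne : B.Nonempty := ⟨x, hxB⟩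
    obtain ⟨m, hmB, hmax⟩ := Finset.exists_max_image B (fun y => e y) hBne
    obtain ⟨f, hfB, hmin⟩ := Finset.exists_min_image B (fun y => e y) hBne
    have hmlight : X m ≤ c := ((Finset.mem_filter.mp hmB).2).1
    have hmj : b' m = j := ((Finset.mem_filter.mp hmB).2).2
    have hfj : b' f = j := ((Finset.mem_filter.mp hfB).2).2
    -- lower bound on F f
    have hFf : (j:ℝ) * c ≤ F f := by
      have hjb : j ≤ b f := by
        have h1 : min (b f) (Bnd - 1) = j := hfj
        omega
      have : (j:ℝ) ≤ F f / c := by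
        have h0 : (0:ℝ) ≤ F f / c := div_nonneg (hF0 f) hc0.le
        exact (Nat.le_floor_iff h0).mp hjb
      calc (j:ℝ) * c ≤ (F f / c) * c := by
            apply mul_le_mul_of_nonneg_right this hc0.le
        _ = F f := by field_simp
    -- upper bound on F m
    have hFm : F m ≤ ((j:ℝ) + 1) * c := by
      by_cases hbm : b m = j
      · have : F m / c < (j:ℝ) + 1 := by
          have h2 : F m / c < ((b m : ℕ) : ℝ) + 1 :=
            Nat.lt_floor_add_one (F m / c)
          rw [hbm] at h2
          exact_mod_cast h2
        calc F m = (F m / c) * c := by field_simp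
          _ ≤ ((j:ℝ) + 1) * c := mul_le_mul_of_nonneg_right this.le hc0.le
      · have hjB : j = Bnd - 1 := by
          have hmj' : min (b m) (Bnd - 1) = j := hmj
          omega
        have hj1 : (j:ℝ) + 1 = (Bnd : ℝ) := by
          have : j + 1 = Bnd := by omega
          exact_mod_cast congrArg (Nat.cast : ℕ → ℝ) this
        rw [hj1, hBndR]
        calc F m ≤ M := hFM m
          _ ≤ 1 - (H.card : ℝ) * c := hMval
    -- sum over bucket ≤ (F m - F f) + X m
    have hkey : F f + ∑ y ∈ B.erase m, X y ≤ F m := by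
      have hdisj : Disjoint (univ.filter (fun y => X y ≤ c ∧ e y < e f)) (B.erase m) := by
        rw [Finset.disjoint_left]
        intro y hy hy2
        have hyB := Finset.mem_of_mem_erase hy2
        have := hmin y hyB
        simp only [Finset.mem_filter] at hy
        exact absurd hy.2.2 (not_lt.mpr this)
      have hsub : (univ.filter (fun y => X y ≤ c ∧ e y < e f)) ∪ B.erase m
          ⊆ univ.filter (fun y => X y ≤ c ∧ e y < e m) := by
        intro y hy
        rcases Finset.mem_union.mp hy with h | h
        · simp only [Finset.mem_filter] at h ⊢
          refine ⟨h.1, h.2.1, lt_of_lt_of_le h.2.2 (hmax f hfB)⟩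
        · have hyB := Finset.mem_of_mem_erase h
          have hym : y ≠ m := Finset.ne_of_mem_erase h
          have hylight : X y ≤ c := ((Finset.mem_filter.mp hyB).2).1
          simp only [Finset.mem_filter, Finset.mem_univ, true_and]
          refine ⟨hylight, lt_of_le_of_ne (hmax y hyB) ?_⟩
          intro hc'
          exact hym (e.injective hc')
      calc F f + ∑ y ∈ B.erase m, X y
          = ∑ y ∈ (univ.filter (fun y => X y ≤ c ∧ e y < e f)) ∪ B.erase m, X y := by
            rw [Finset.sum_union hdisj, hF]
        _ ≤ F m := by
            rw [hF]
            exact Finset.sum_le_sum_of_subset_of_nonneg hsub (fun i _ _ => hX0 i)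
    have hBsum : ∑ y ∈ B, X y = ∑ y ∈ B.erase m, X y + X m :=
      (Finset.sum_erase_add B X hmB).symm
    rw [← h2c]
    rw [hBsum]
    linarith [hFf, hFm, hkey, hmlight]
end

section
/- Let f: 𝔽₂^r → 𝔽₂^n be any function and let 0 < ε < 1/4. Let ℓ = ⌈n + 3·log₂(1/ε)⌉. If r > ℓ, then there exist a matrix A ∈ 𝔽₂^{r×ℓ} and a vector b ∈ 𝔽₂^r such that the function h: 𝔽₂^ℓ → 𝔽₂^n defined by h(x) = f(Ax + b) satisfies TV(f(U^r), h(U^ℓ)) ≤ 2ε, where U^r and U^ℓ denote the uniform distributions on 𝔽₂^r and 𝔽₂^ℓ respectively and f(U^r), h(U^ℓ) denote pushforward distributions. -/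
open Finset

/-! ### Auxiliary lemmas -/

lemma zmod2_add_self' (a : ZMod 2) : a + a = (0 : ZMod 2) := by revert a; decide

lemma vec_add_self' {k : ℕ} (u : Fin k → ZMod 2) : u + u = 0 :=
  funext fun i => zmod2_add_self' (u i)

lemma trans_sum' {k : ℕ} (c : Fin k → ZMod 2) (g : (Fin k → ZMod 2) → ℝ) :
    ∑ b, g (c + b) = ∑ u, g u :=
  Equiv.sum_comp (Equiv.addLeft c) g

lemma mulVec_surj' {r ℓ : ℕ} (d : Fin ℓ → ZMod 2) (hd : d ≠ 0) :
    Function.Surjective (fun A : Matrix (Fin r) (Fin ℓ) (ZMod 2) => A.mulVec d) := by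
  obtain ⟨j₀, hj₀⟩ := Function.ne_iff.mp hd
  have hdj : d j₀ = 1 := by
    have h1 : ∀ z : ZMod 2, z ≠ 0 → z = 1 := by decide
    exact h1 _ hj₀
  intro v
  refine ⟨Matrix.of (fun i j => if j = j₀ then v i else 0), ?_⟩
  funext i
  simp [Matrix.mulVec, dotProduct, ite_mul, hdj]

lemma fiber_sum' {G H : Type*} [Fintype G] [Fintype H] [DecidableEq H]
    [AddCommGroup G] [AddCommGroup H] (φ : G →+ H) (hs : Function.Surjective φ)
    (h : H → ℝ) :
    (Fintype.card H : ℝ) * ∑ g, h (φ g) = (Fintype.card G : ℝ) * ∑ v, h v := by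
  have hcard : ∀ v : H, #{g : G | φ g = v} = #{g : G | φ g = (0:H)} := by
    intro v
    obtain ⟨g₀, hg₀⟩ := hs v
    apply Finset.card_bij (fun g _ => g - g₀)
    · intro a ha
      simp only [Finset.mem_filter, Finset.mem_univ, true_and] at ha ⊢
      rw [map_sub, ha, hg₀, sub_self]
    · intro a _ b _ hab
      exact sub_left_injective hab
    · intro b hb
      refine ⟨b + g₀, ?_, by abel⟩
      simp only [Finset.mem_filter, Finset.mem_univ, true_and] at hb ⊢
      rw [map_add, hb, hg₀, zero_add]
  have key : ∀ g : H → ℝ, ∑ a : G, g (φ a) = (#{a : G | φ a = (0:H)} : ℝ) * ∑ v, g v := by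
    intro g
    rw [← Finset.sum_fiberwise' Finset.univ φ g, Finset.mul_sum]
    refine Finset.sum_congr rfl fun v _ => ?_
    rw [Finset.sum_const, nsmul_eq_mul, hcard v]
  have hc : (Fintype.card G : ℝ) = (#{a : G | φ a = (0:H)} : ℝ) * (Fintype.card H : ℝ) := by
    have := key (fun _ => (1:ℝ))
    simpa [Finset.card_univ, mul_comm] using this
  rw [key h, hc]; ring

lemma swap4' {A B C D : Type*} [Fintype A] [Fintype B] [Fintype C] [Fintype D]
    (g : A → B → C → D → ℝ) :
    ∑ a, ∑ b, ∑ c, ∑ d, g a b c d = ∑ c, ∑ d, ∑ a, ∑ b, g a b c d := by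
  calc ∑ a, ∑ b, ∑ c, ∑ d, g a b c d
      = ∑ a, ∑ c, ∑ b, ∑ d, g a b c d :=
        Finset.sum_congr rfl fun a _ => Finset.sum_comm
    _ = ∑ c, ∑ a, ∑ b, ∑ d, g a b c d := Finset.sum_comm
    _ = ∑ c, ∑ a, ∑ d, ∑ b, g a b c d :=
        Finset.sum_congr rfl fun c _ => Finset.sum_congr rfl fun a _ => Finset.sum_comm
    _ = ∑ c, ∑ d, ∑ a, ∑ b, g a b c d :=
        Finset.sum_congr rfl fun c _ => Finset.sum_comm

lemma swap3' {A B C : Type*} [Fintype A] [Fintype B] [Fintype C]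
    (g : A → B → C → ℝ) :
    ∑ a, ∑ b, ∑ c, g a b c = ∑ c, ∑ a, ∑ b, g a b c := by
  calc ∑ a, ∑ b, ∑ c, g a b c
      = ∑ a, ∑ c, ∑ b, g a b c := Finset.sum_congr rfl fun a _ => Finset.sum_comm
    _ = ∑ c, ∑ a, ∑ b, g a b c := Finset.sum_comm

lemma sum_abs_le_sqrt' {ι : Type*} [Fintype ι] (Z : ι → ℝ) :
    ∑ i, |Z i| ≤ Real.sqrt ((Fintype.card ι : ℝ) * ∑ i, (Z i)^2) := by
  have h := sq_sum_le_card_mul_sum_sq (s := Finset.univ) (f := fun i => |Z i|)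
  have h2 : (∑ i, |Z i|)^2 ≤ (Fintype.card ι : ℝ) * ∑ i, (Z i)^2 := by
    simpa [sq_abs, Finset.card_univ] using h
  calc ∑ i, |Z i| = Real.sqrt ((∑ i, |Z i|)^2) :=
        (Real.sqrt_sq (by positivity)).symm
    _ ≤ _ := Real.sqrt_le_sqrt h2

lemma sum_sqrt_le' {ι : Type*} [Fintype ι] (P : ι → ℝ) (hP : ∀ i, 0 ≤ P i) :
    ∑ i, Real.sqrt (P i) ≤ Real.sqrt ((Fintype.card ι : ℝ) * ∑ i, P i) := by
  have h := sum_abs_le_sqrt' (fun i => Real.sqrt (P i))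
  have h1 : ∀ i : ι, |Real.sqrt (P i)| = Real.sqrt (P i) :=
    fun i => abs_of_nonneg (Real.sqrt_nonneg _)
  have h2 : ∀ i : ι, (Real.sqrt (P i))^2 = P i := fun i => Real.sq_sqrt (hP i)
  rw [Finset.sum_congr rfl (fun i _ => (h1 i).symm),
    show (∑ i, P i) = ∑ i, (Real.sqrt (P i))^2 from
      (Finset.sum_congr rfl (fun i _ => h2 i)).symm]
  exact h

section Key
variable {r ℓ n : ℕ} (f : (Fin r → ZMod 2) → (Fin n → ZMod 2))

lemma E1' (x : Fin ℓ → ZMod 2) (y : Fin n → ZMod 2) :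
    ∑ A : Matrix (Fin r) (Fin ℓ) (ZMod 2), ∑ b : Fin r → ZMod 2,
      (if f (A.mulVec x + b) = y then (1:ℝ) else 0)
    = (Fintype.card (Matrix (Fin r) (Fin ℓ) (ZMod 2)) : ℝ) *
      (∑ u, if f u = y then (1:ℝ) else 0) := by
  classical
  have h1 : ∀ A : Matrix (Fin r) (Fin ℓ) (ZMod 2),
      ∑ b, (if f (A.mulVec x + b) = y then (1:ℝ) else 0)
      = ∑ u, (if f u = y then (1:ℝ) else 0) :=
    fun A => trans_sum' (A.mulVec x) (fun u => if f u = y then (1:ℝ) else 0)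
  simp only [h1, Finset.sum_const, Finset.card_univ, nsmul_eq_mul]

lemma E2' (x x' : Fin ℓ → ZMod 2) (hxx : x ≠ x') (y : Fin n → ZMod 2) :
    ∑ A : Matrix (Fin r) (Fin ℓ) (ZMod 2), ∑ b : Fin r → ZMod 2,
      (if f (A.mulVec x + b) = y then (1:ℝ) else 0) *
      (if f (A.mulVec x' + b) = y then (1:ℝ) else 0)
    = (Fintype.card (Matrix (Fin r) (Fin ℓ) (ZMod 2)) : ℝ) *
      ((∑ u, if f u = y then (1:ℝ) else 0) * (∑ u, if f u = y then (1:ℝ) else 0)) /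
      (Fintype.card (Fin r → ZMod 2) : ℝ) := by
  classical
  set d := x + x' with hd
  have hd0 : d ≠ 0 := by
    intro h
    apply hxx
    funext i
    have hi := congrFun h i
    have h2 : ∀ a b : ZMod 2, a + b = 0 → a = b := by decide
    exact h2 _ _ hi
  have hrw : ∀ (A : Matrix (Fin r) (Fin ℓ) (ZMod 2)) (b : Fin r → ZMod 2),
      A.mulVec x' + b = (A.mulVec x + b) + A.mulVec d := by
    intro A b
    rw [hd, Matrix.mulVec_add]
    have h0 := vec_add_self' (A.mulVec x)
    calc A.mulVec x' + b
        = (A.mulVec x + A.mulVec x) + (A.mulVec x' + b) := by rw [h0, zero_add]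
      _ = (A.mulVec x + b) + (A.mulVec x + A.mulVec x') := by abel
  have hinner : ∀ A : Matrix (Fin r) (Fin ℓ) (ZMod 2),
      (∑ b, (if f (A.mulVec x + b) = y then (1:ℝ) else 0) *
            (if f (A.mulVec x' + b) = y then (1:ℝ) else 0))
      = ∑ u, (if f u = y then (1:ℝ) else 0) * (if f (u + A.mulVec d) = y then (1:ℝ) else 0) := by
    intro A
    have ht := trans_sum' (A.mulVec x)
      (fun u => (if f u = y then (1:ℝ) else 0) * (if f (u + A.mulVec d) = y then (1:ℝ) else 0))
    rw [← ht]
    exact Finset.sum_congr rfl fun b _ => by rw [← hrw A b]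
  set h : (Fin r → ZMod 2) → ℝ :=
    fun v => ∑ u, (if f u = y then (1:ℝ) else 0) * (if f (u + v) = y then (1:ℝ) else 0) with hh
  have hsurj : Function.Surjective (Matrix.mulVec.addMonoidHomLeft (m := Fin r) d) :=
    mulVec_surj' d hd0
  have hfib := fiber_sum' (Matrix.mulVec.addMonoidHomLeft (m := Fin r) d) hsurj h
  have hsum_h : ∑ v, h v
      = (∑ u, if f u = y then (1:ℝ) else 0) * (∑ u, if f u = y then (1:ℝ) else 0) := by
    rw [hh]
    rw [Finset.sum_comm]
    have h3 : ∀ u : Fin r → ZMod 2,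
        (∑ v, (if f u = y then (1:ℝ) else 0) * (if f (u + v) = y then (1:ℝ) else 0))
        = (if f u = y then (1:ℝ) else 0) * ∑ w, (if f w = y then (1:ℝ) else 0) := by
      intro u
      rw [← Finset.mul_sum]
      congr 1
      exact trans_sum' u (fun w => if f w = y then (1:ℝ) else 0)
    simp only [h3]
    rw [← Finset.sum_mul]
  have hL : (∑ A : Matrix (Fin r) (Fin ℓ) (ZMod 2), ∑ b : Fin r → ZMod 2,
      (if f (A.mulVec x + b) = y then (1:ℝ) else 0) *
      (if f (A.mulVec x' + b) = y then (1:ℝ) else 0))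
      = ∑ A : Matrix (Fin r) (Fin ℓ) (ZMod 2),
          h ((Matrix.mulVec.addMonoidHomLeft (m := Fin r) d) A) :=
    Finset.sum_congr rfl fun A _ => hinner A
  have hN0 : (0:ℝ) < (Fintype.card (Fin r → ZMod 2) : ℝ) := by
    exact_mod_cast Fintype.card_pos
  rw [hL, eq_div_iff hN0.ne']
  rw [hsum_h] at hfib
  linarith [hfib]

lemma sumT' (y : Fin n → ZMod 2) :
    ∑ A : Matrix (Fin r) (Fin ℓ) (ZMod 2), ∑ b : Fin r → ZMod 2,
      (∑ x, if f (A.mulVec x + b) = y then (1:ℝ) else 0)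
    = (Fintype.card (Fin ℓ → ZMod 2) : ℝ) *
        ((Fintype.card (Matrix (Fin r) (Fin ℓ) (ZMod 2)) : ℝ) *
          (∑ u, if f u = y then (1:ℝ) else 0)) := by
  classical
  rw [swap3' (fun (A : Matrix (Fin r) (Fin ℓ) (ZMod 2)) (b : Fin r → ZMod 2) x =>
    (if f (A.mulVec x + b) = y then (1:ℝ) else 0))]
  rw [Finset.sum_congr rfl (fun x _ => E1' f x y), Finset.sum_const, Finset.card_univ,
    nsmul_eq_mul]

lemma sumT2' (y : Fin n → ZMod 2) :
    ∑ A : Matrix (Fin r) (Fin ℓ) (ZMod 2), ∑ b : Fin r → ZMod 2,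
      ((∑ x, if f (A.mulVec x + b) = y then (1:ℝ) else 0))^2
    = (Fintype.card (Fin ℓ → ZMod 2) : ℝ) *
        ((Fintype.card (Matrix (Fin r) (Fin ℓ) (ZMod 2)) : ℝ) *
          (∑ u, if f u = y then (1:ℝ) else 0))
      + (Fintype.card (Fin ℓ → ZMod 2) : ℝ) * ((Fintype.card (Fin ℓ → ZMod 2) : ℝ) - 1) *
        ((Fintype.card (Matrix (Fin r) (Fin ℓ) (ZMod 2)) : ℝ) *
          ((∑ u, if f u = y then (1:ℝ) else 0) * (∑ u, if f u = y then (1:ℝ) else 0)) /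
          (Fintype.card (Fin r → ZMod 2) : ℝ)) := by
  classical
  have hsq : ∀ (A : Matrix (Fin r) (Fin ℓ) (ZMod 2)) (b : Fin r → ZMod 2),
      ((∑ x, if f (A.mulVec x + b) = y then (1:ℝ) else 0))^2
      = ∑ x, ∑ x', (if f (A.mulVec x + b) = y then (1:ℝ) else 0) *
                   (if f (A.mulVec x' + b) = y then (1:ℝ) else 0) := by
    intro A b
    rw [sq, Fintype.sum_mul_sum]
  simp only [hsq]
  rw [swap4' (fun (A : Matrix (Fin r) (Fin ℓ) (ZMod 2)) (b : Fin r → ZMod 2) x x' =>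
    (if f (A.mulVec x + b) = y then (1:ℝ) else 0) *
    (if f (A.mulVec x' + b) = y then (1:ℝ) else 0))]
  have hinner : ∀ x : Fin ℓ → ZMod 2,
      (∑ x' : Fin ℓ → ZMod 2, ∑ A : Matrix (Fin r) (Fin ℓ) (ZMod 2), ∑ b : Fin r → ZMod 2,
        (if f (A.mulVec x + b) = y then (1:ℝ) else 0) *
        (if f (A.mulVec x' + b) = y then (1:ℝ) else 0))
      = (Fintype.card (Matrix (Fin r) (Fin ℓ) (ZMod 2)) : ℝ) *
          (∑ u, if f u = y then (1:ℝ) else 0)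
        + ((Fintype.card (Fin ℓ → ZMod 2) : ℝ) - 1) *
          ((Fintype.card (Matrix (Fin r) (Fin ℓ) (ZMod 2)) : ℝ) *
            ((∑ u, if f u = y then (1:ℝ) else 0) * (∑ u, if f u = y then (1:ℝ) else 0)) /
            (Fintype.card (Fin r → ZMod 2) : ℝ)) := by
    intro x
    rw [← Finset.add_sum_erase _ _ (Finset.mem_univ x)]
    congr 1
    · have hdiag : ∀ (A : Matrix (Fin r) (Fin ℓ) (ZMod 2)) (b : Fin r → ZMod 2),
          (if f (A.mulVec x + b) = y then (1:ℝ) else 0) *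
          (if f (A.mulVec x + b) = y then (1:ℝ) else 0)
          = (if f (A.mulVec x + b) = y then (1:ℝ) else 0) := by
        intro A b
        by_cases h : f (A.mulVec x + b) = y <;> simp [h]
      simp only [hdiag]
      exact E1' f x y
    · rw [Finset.sum_congr rfl (fun x' hx' => E2' f x x' (Ne.symm (Finset.mem_erase.mp hx').1) y)]
      rw [Finset.sum_const, Finset.card_erase_of_mem (Finset.mem_univ x), nsmul_eq_mul,
        Finset.card_univ, Nat.cast_sub Fintype.card_pos, Nat.cast_one]
  rw [Finset.sum_congr rfl (fun x _ => hinner x), Finset.sum_const, Finset.card_univ,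
    nsmul_eq_mul]
  ring

lemma key_bound {r ℓ n : ℕ} (f : (Fin r → ZMod 2) → (Fin n → ZMod 2)) :
    ∃ (A : Matrix (Fin r) (Fin ℓ) (ZMod 2)) (b : Fin r → ZMod 2),
      (∑ y, |push f (unif (Fin r → ZMod 2)) y
            - push (fun x => f (A.mulVec x + b)) (unif (Fin ℓ → ZMod 2)) y|)
        ≤ Real.sqrt ((Fintype.card (Fin n → ZMod 2) : ℝ) /
            (Fintype.card (Fin ℓ → ZMod 2) : ℝ)) := by
  classical
  set N : ℝ := (Fintype.card (Fin r → ZMod 2) : ℝ) with hNdef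
  set M : ℝ := (Fintype.card (Fin ℓ → ZMod 2) : ℝ) with hMdef
  set CM : ℝ := (Fintype.card (Matrix (Fin r) (Fin ℓ) (ZMod 2)) : ℝ) with hCMdef
  set Gc : ℝ := (Fintype.card (Fin n → ZMod 2) : ℝ) with hGcdef
  have hN0 : (0:ℝ) < N := by rw [hNdef]; exact_mod_cast Fintype.card_pos
  have hM0 : (0:ℝ) < M := by rw [hMdef]; exact_mod_cast Fintype.card_pos
  have hCM0 : (0:ℝ) < CM := by rw [hCMdef]; exact_mod_cast Fintype.card_pos
  have hGc0 : (0:ℝ) < Gc := by rw [hGcdef]; exact_mod_cast Fintype.card_pos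
  -- notation
  set S : (Fin n → ZMod 2) → ℝ := fun y => ∑ u, if f u = y then (1:ℝ) else 0 with hSdef
  have hS0 : ∀ y, 0 ≤ S y := by
    intro y; rw [hSdef]
    exact Finset.sum_nonneg fun u _ => by positivity
  have hP : ∀ y, push f (unif (Fin r → ZMod 2)) y = S y / N := by
    intro y
    simp only [push, unif, hSdef, ← hNdef]
    rw [div_eq_mul_inv, Finset.sum_mul]
    exact Finset.sum_congr rfl fun u _ => by by_cases h : f u = y <;> simp [h]
  have hQ : ∀ (A : Matrix (Fin r) (Fin ℓ) (ZMod 2)) (b : Fin r → ZMod 2) (y),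
      push (fun x => f (A.mulVec x + b)) (unif (Fin ℓ → ZMod 2)) y
      = (∑ x, if f (A.mulVec x + b) = y then (1:ℝ) else 0) / M := by
    intro A b y
    simp only [push, unif, ← hMdef]
    rw [div_eq_mul_inv, Finset.sum_mul]
    exact Finset.sum_congr rfl fun x _ => by by_cases h : f (A.mulVec x + b) = y <;> simp [h]
  have hPnn : ∀ y, 0 ≤ push f (unif (Fin r → ZMod 2)) y := by
    intro y; rw [hP]; positivity
  have hPsum : ∑ y, push f (unif (Fin r → ZMod 2)) y = 1 := by
    simp only [push, unif, ← hNdef]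
    rw [Finset.sum_comm]
    have h1 : ∀ u : Fin r → ZMod 2,
        (∑ y, if f u = y then N⁻¹ else 0) = N⁻¹ := by
      intro u; simp
    refine (Finset.sum_congr rfl (g := fun _ => N⁻¹) (fun u _ => by convert h1 u)).trans ?_
    rw [Finset.sum_const, Finset.card_univ,
      nsmul_eq_mul, ← hNdef]
    field_simp
  -- variance bound
  have hVar : ∀ y, ∑ A : Matrix (Fin r) (Fin ℓ) (ZMod 2), ∑ b : Fin r → ZMod 2,
      (push f (unif (Fin r → ZMod 2)) y
        - push (fun x => f (A.mulVec x + b)) (unif (Fin ℓ → ZMod 2)) y)^2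
      ≤ CM * N * push f (unif (Fin r → ZMod 2)) y / M := by
    intro y
    have hterm : ∀ (A : Matrix (Fin r) (Fin ℓ) (ZMod 2)) (b : Fin r → ZMod 2),
        (push f (unif (Fin r → ZMod 2)) y
          - push (fun x => f (A.mulVec x + b)) (unif (Fin ℓ → ZMod 2)) y)^2
        = ((∑ x, if f (A.mulVec x + b) = y then (1:ℝ) else 0))^2 * (1/M^2)
          - (2 * S y / (N * M)) * (∑ x, if f (A.mulVec x + b) = y then (1:ℝ) else 0)
          + (S y / N)^2 := by
      intro A b
      rw [hP, hQ]
      field_simp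
      ring
    simp only [hterm]
    have hexp : ∑ A : Matrix (Fin r) (Fin ℓ) (ZMod 2), ∑ b : Fin r → ZMod 2,
        (((∑ x, if f (A.mulVec x + b) = y then (1:ℝ) else 0))^2 * (1/M^2)
          - (2 * S y / (N * M)) * (∑ x, if f (A.mulVec x + b) = y then (1:ℝ) else 0)
          + (S y / N)^2)
        = (∑ A : Matrix (Fin r) (Fin ℓ) (ZMod 2), ∑ b : Fin r → ZMod 2,
            ((∑ x, if f (A.mulVec x + b) = y then (1:ℝ) else 0))^2) * (1/M^2)
          - (2 * S y / (N * M)) * (∑ A : Matrix (Fin r) (Fin ℓ) (ZMod 2), ∑ b : Fin r → ZMod 2,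
            (∑ x, if f (A.mulVec x + b) = y then (1:ℝ) else 0))
          + CM * N * (S y / N)^2 := by
      simp only [Finset.sum_add_distrib, Finset.sum_sub_distrib, ← Finset.sum_mul,
        ← Finset.mul_sum, Finset.sum_const, Finset.card_univ, nsmul_eq_mul]
      try rw [← hCMdef, ← hNdef]
      try ring
    rw [hexp, sumT2' f y, sumT' f y, hP, ← hNdef, ← hMdef, ← hCMdef]
    have hSS := hS0 y
    have heq : (M * (CM * S y)
          + M * (M - 1) * (CM * (S y * S y) / N)) * (1 / M ^ 2)
        - 2 * S y / (N * M) * (M * (CM * S y)) + CM * N * (S y / N) ^ 2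
        = CM * S y / M - CM * (S y)^2 / (M * N) := by
      field_simp
      ring
    rw [heq]
    have h2 : CM * N * (S y / N) / M = CM * S y / M := by
      field_simp
    rw [h2]
    have h3 : 0 ≤ CM * (S y)^2 / (M * N) := by positivity
    linarith
  -- Cauchy-Schwarz per y, then sum over y
  have hCS : ∀ y, (∑ t : Matrix (Fin r) (Fin ℓ) (ZMod 2) × (Fin r → ZMod 2),
      |push f (unif (Fin r → ZMod 2)) y
        - push (fun x => f (t.1.mulVec x + t.2)) (unif (Fin ℓ → ZMod 2)) y|)
      ≤ CM * N * Real.sqrt (push f (unif (Fin r → ZMod 2)) y / M) := by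
    intro y
    have h1 := sum_abs_le_sqrt' (fun t : Matrix (Fin r) (Fin ℓ) (ZMod 2) × (Fin r → ZMod 2) =>
      push f (unif (Fin r → ZMod 2)) y
        - push (fun x => f (t.1.mulVec x + t.2)) (unif (Fin ℓ → ZMod 2)) y)
    have hcard : (Fintype.card (Matrix (Fin r) (Fin ℓ) (ZMod 2) × (Fin r → ZMod 2)) : ℝ)
        = CM * N := by
      rw [Fintype.card_prod, Nat.cast_mul, ← hCMdef, ← hNdef]
    have h2 : (∑ t : Matrix (Fin r) (Fin ℓ) (ZMod 2) × (Fin r → ZMod 2),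
        (push f (unif (Fin r → ZMod 2)) y
          - push (fun x => f (t.1.mulVec x + t.2)) (unif (Fin ℓ → ZMod 2)) y)^2)
        ≤ CM * N * push f (unif (Fin r → ZMod 2)) y / M := by
      rw [Fintype.sum_prod_type]
      exact hVar y
    calc (∑ t : Matrix (Fin r) (Fin ℓ) (ZMod 2) × (Fin r → ZMod 2),
        |push f (unif (Fin r → ZMod 2)) y
          - push (fun x => f (t.1.mulVec x + t.2)) (unif (Fin ℓ → ZMod 2)) y|)
        ≤ Real.sqrt ((CM * N) * ∑ t : Matrix (Fin r) (Fin ℓ) (ZMod 2) × (Fin r → ZMod 2),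
            (push f (unif (Fin r → ZMod 2)) y
              - push (fun x => f (t.1.mulVec x + t.2)) (unif (Fin ℓ → ZMod 2)) y)^2) := by
          rw [← hcard]; exact h1
      _ ≤ Real.sqrt ((CM * N) * (CM * N * push f (unif (Fin r → ZMod 2)) y / M)) := by
          apply Real.sqrt_le_sqrt
          apply mul_le_mul_of_nonneg_left h2 (by positivity)
      _ = CM * N * Real.sqrt (push f (unif (Fin r → ZMod 2)) y / M) := by
          rw [show (CM * N) * (CM * N * push f (unif (Fin r → ZMod 2)) y / M)
            = (CM * N)^2 * (push f (unif (Fin r → ZMod 2)) y / M) from by ring]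
          rw [Real.sqrt_mul (by positivity), Real.sqrt_sq (by positivity)]
    -- done
  -- total bound
  have hTot : (∑ t : Matrix (Fin r) (Fin ℓ) (ZMod 2) × (Fin r → ZMod 2),
      ∑ y, |push f (unif (Fin r → ZMod 2)) y
        - push (fun x => f (t.1.mulVec x + t.2)) (unif (Fin ℓ → ZMod 2)) y|)
      ≤ CM * N * Real.sqrt (Gc / M) := by
    rw [Finset.sum_comm]
    calc (∑ y, ∑ t : Matrix (Fin r) (Fin ℓ) (ZMod 2) × (Fin r → ZMod 2),
        |push f (unif (Fin r → ZMod 2)) y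
          - push (fun x => f (t.1.mulVec x + t.2)) (unif (Fin ℓ → ZMod 2)) y|)
        ≤ ∑ y, CM * N * Real.sqrt (push f (unif (Fin r → ZMod 2)) y / M) :=
          Finset.sum_le_sum fun y _ => hCS y
      _ = CM * N / Real.sqrt M * ∑ y, Real.sqrt (push f (unif (Fin r → ZMod 2)) y) := by
          rw [Finset.mul_sum]
          refine Finset.sum_congr rfl fun y _ => ?_
          rw [Real.sqrt_div (hPnn y) M]
          ring
      _ ≤ CM * N / Real.sqrt M * Real.sqrt Gc := by
          have hb := sum_sqrt_le' (fun y => push f (unif (Fin r → ZMod 2)) y) hPnn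
          rw [hPsum, mul_one, ← hGcdef] at hb
          exact mul_le_mul_of_nonneg_left hb (by positivity)
      _ = CM * N * Real.sqrt (Gc / M) := by
          rw [Real.sqrt_div hGc0.le]
          ring
  -- averaging
  have hne : (Finset.univ :
      Finset (Matrix (Fin r) (Fin ℓ) (ZMod 2) × (Fin r → ZMod 2))).Nonempty :=
    Finset.univ_nonempty
  have hconst : (∑ _t : Matrix (Fin r) (Fin ℓ) (ZMod 2) × (Fin r → ZMod 2),
      Real.sqrt (Gc / M)) = CM * N * Real.sqrt (Gc / M) := by
    rw [Finset.sum_const, Finset.card_univ, nsmul_eq_mul, Fintype.card_prod, Nat.cast_mul,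
      ← hCMdef, ← hNdef]
  obtain ⟨t, -, ht⟩ := Finset.exists_le_of_sum_le
    (f := fun t : Matrix (Fin r) (Fin ℓ) (ZMod 2) × (Fin r → ZMod 2) =>
      ∑ y, |push f (unif (Fin r → ZMod 2)) y
        - push (fun x => f (t.1.mulVec x + t.2)) (unif (Fin ℓ → ZMod 2)) y|)
    (g := fun _ => Real.sqrt (Gc / M)) hne (by rw [hconst]; exact hTot)
  exact ⟨t.1, t.2, ht⟩

end Key

theorem stmt5 (r n : ℕ) (f : (Fin r → ZMod 2) → (Fin n → ZMod 2)) (ε : ℝ)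
    (hε : 0 < ε) (hε' : ε < 1 / 4)
    (ℓ : ℕ) (hℓ : ℓ = ⌈(n : ℝ) + 3 * Real.logb 2 (1 / ε)⌉₊)
    (hr : ℓ < r) :
    ∃ (A : Matrix (Fin r) (Fin ℓ) (ZMod 2)) (b : Fin r → ZMod 2),
      tv (push f (unif (Fin r → ZMod 2)))
         (push (fun x => f (A.mulVec x + b)) (unif (Fin ℓ → ZMod 2))) ≤ 2 * ε := by
  obtain ⟨A, b, hab⟩ := key_bound (ℓ := ℓ) f
  refine ⟨A, b, ?_⟩
  have hcard_n : (Fintype.card (Fin n → ZMod 2) : ℝ) = (2:ℝ) ^ n := by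
    rw [Fintype.card_fun]
    simp [ZMod.card]
  have hcard_l : (Fintype.card (Fin ℓ → ZMod 2) : ℝ) = (2:ℝ) ^ ℓ := by
    rw [Fintype.card_fun]
    simp [ZMod.card]
  rw [hcard_n, hcard_l] at hab
  have hε1 : ε ≤ 1 := le_trans hε'.le (by norm_num)
  set L := Real.logb 2 (1/ε) with hLdef
  have hL0 : 0 ≤ L := Real.logb_nonneg (by norm_num) (by
    rw [le_div_iff₀ hε]; simpa using hε1)
  have hceil : (n : ℝ) + 3 * L ≤ (ℓ : ℝ) := by
    rw [hℓ]; exact Nat.le_ceil _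
  have h2L : (2:ℝ) ^ L = 1/ε := Real.rpow_logb (by norm_num) (by norm_num) (by positivity)
  have h1 : (2:ℝ) ^ ((n:ℝ) + 3*L) ≤ (2:ℝ) ^ (ℓ:ℝ) :=
    Real.rpow_le_rpow_of_exponent_le (by norm_num) hceil
  have h2 : (2:ℝ) ^ ((n:ℝ) + 3*L) = (2:ℝ)^n * (1/ε)^3 := by
    rw [Real.rpow_add (by norm_num), Real.rpow_natCast]
    congr 1
    rw [show (3:ℝ)*L = L*3 by ring, Real.rpow_mul (by norm_num : (0:ℝ) ≤ 2), h2L,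
      show ((3:ℝ)) = ((3:ℕ):ℝ) by norm_num, Real.rpow_natCast]

  have h3 : (2:ℝ) ^ (ℓ:ℝ) = (2:ℝ)^ℓ := Real.rpow_natCast 2 ℓ
  have h1' : (2:ℝ)^n * (1/ε)^3 ≤ (2:ℝ)^ℓ := by rw [← h2, ← h3]; exact h1
  have hpow : (2:ℝ)^n / (2:ℝ)^ℓ ≤ ε^3 := by
    rw [div_le_iff₀ (by positivity)]
    calc (2:ℝ)^n = ((2:ℝ)^n * (1/ε)^3) * ε^3 := by field_simp
      _ ≤ (2:ℝ)^ℓ * ε^3 := mul_le_mul_of_nonneg_right h1' (by positivity)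
      _ = ε^3 * (2:ℝ)^ℓ := by ring
  have hsq : (2:ℝ)^n / (2:ℝ)^ℓ ≤ ε^2 := by nlinarith [sq_nonneg ε]
  have hfinal : Real.sqrt ((2:ℝ)^n / (2:ℝ)^ℓ) ≤ ε :=
    calc Real.sqrt ((2:ℝ)^n / (2:ℝ)^ℓ) ≤ Real.sqrt (ε^2) := Real.sqrt_le_sqrt hsq
      _ = ε := Real.sqrt_sq hε.le
  simp only [tv]
  linarith [le_trans hab hfinal]
end

section
/- Let n, d, k be positive integers and α, β ∈ [0,1]. Suppose Iso: 𝔽₂^n → {0,1} is an (α, β, k−1)-isolator for the class of degree-d polynomial sources on 𝔽₂^n with at most 4(k+1) input variables. Then Iso is an (α, β + 2^{−k}, k)-isolator for the class of all degree-d polynomial sources on 𝔽₂^n (with any number of input variables). -/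
open Finset

/-- Identify `Bool` with `𝔽₂`. -/
def b2f (b : Bool) : ZMod 2 := if b then 1 else 0

/-- Degree-`d` polynomial sources on `𝔽₂^n` with exactly `r` input variables:
pushforwards of the uniform distribution on `𝔽₂^r` under an `n`-tuple of
`𝔽₂`-polynomials of total degree at most `d`. -/
def polySourceExact (d r n : ℕ) : Set ((Fin n → Bool) → ℝ) :=
  {X | ∃ P : Fin n → MvPolynomial (Fin r) (ZMod 2),
    (∀ i, (P i).totalDegree ≤ d) ∧
    X = push (fun u i => decide (MvPolynomial.eval (fun j => b2f (u j)) (P i) = 1))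
          (unif (Fin r → Bool))}

/-- Degree-`d` polynomial sources on `𝔽₂^n` with any (positive) number of input variables. -/
def polySource (d n : ℕ) : Set ((Fin n → Bool) → ℝ) :=
  {X | ∃ r : ℕ, 0 < r ∧ X ∈ polySourceExact d r n}

/-- Degree-`d` polynomial sources on `𝔽₂^n` with at most `R` input variables. -/
def polySourceAtMostInputs (d R n : ℕ) : Set ((Fin n → Bool) → ℝ) :=
  {X | ∃ r : ℕ, 0 < r ∧ r ≤ R ∧ X ∈ polySourceExact d r n}

/-! ### Auxiliary lemmas -/

section Aux

open MvPolynomial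

lemma b2f_decide_eq (z : ZMod 2) (c : Bool) : (decide (z = 1) = c) ↔ z = b2f c := by
  revert z; cases c <;> decide

lemma b2f_decide (z : ZMod 2) : b2f (decide (z = 1)) = z := by revert z; decide

lemma count_linear {t : ℕ} (v : Fin t → ZMod 2) (hv : v ≠ 0) (s : ZMod 2) :
    ∑ m : Fin t → ZMod 2, (if ∑ i, m i * v i = s then (1:ℝ) else 0) = 2^(t-1) := by
  obtain ⟨i0, hi0⟩ : ∃ i, v i ≠ 0 := by
    by_contra hc; push_neg at hc; exact hv (funext fun i => hc i)
  have hv1 : v i0 = 1 := by revert hi0; generalize v i0 = z; revert z; decide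
  set δ : Fin t → ZMod 2 := fun i => if i = i0 then 1 else 0 with hδ
  have hδv : ∀ m : Fin t → ZMod 2, ∑ i, (m i + δ i) * v i = (∑ i, m i * v i) + 1 := by
    intro m
    have : ∀ i, (m i + δ i) * v i = m i * v i + (if i = i0 then v i else 0) := by
      intro i; by_cases hi : i = i0 <;> simp [hδ, hi] <;> ring
    rw [Finset.sum_congr rfl (fun i _ => this i), Finset.sum_add_distrib,
      Finset.sum_ite_eq' Finset.univ i0 v]
    simp [hv1]
  set g : ZMod 2 → ℝ := fun s' => ∑ m : Fin t → ZMod 2, (if ∑ i, m i * v i = s' then (1:ℝ) else 0) with hg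
  have key : ∀ s' : ZMod 2, g s' = g (s' + 1) := by
    intro s'
    have := Fintype.sum_equiv (Equiv.addRight δ)
      (fun m : Fin t → ZMod 2 => if ∑ i, m i * v i = s' then (1:ℝ) else 0)
      (fun m : Fin t → ZMod 2 => if ∑ i, m i * v i = s' + 1 then (1:ℝ) else 0) ?_
    · exact this
    · intro m
      simp only [Equiv.coe_addRight, Pi.add_apply, hδv m]
      congr 1
      simp only [eq_iff_iff]
      constructor
      · rintro h; rw [h]
      · intro h; exact add_right_cancel h
  have hsum : g s + g (s + 1) = 2^t := by
    rw [hg]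
    simp only [← Finset.sum_add_distrib]
    have : ∀ z : ZMod 2, ((if z = s then (1:ℝ) else 0) + (if z = s + 1 then (1:ℝ) else 0)) = 1 := by
      intro z
      rcases (by decide : ∀ z s : ZMod 2, (z = s ∧ z ≠ s + 1) ∨ (z ≠ s ∧ z = s + 1)) z s with
        ⟨h1,h2⟩|⟨h1,h2⟩ <;> simp [h1, h2]
    rw [Finset.sum_congr rfl (fun m _ => this _)]
    simp [Finset.card_univ]
  have ht : 0 < t := i0.pos
  have h2 : (2:ℝ)^t = 2^(t-1) * 2 := by
    rw [← pow_succ]; congr 1; omega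
  have := key s
  show g s = 2^(t-1)
  rw [this] at hsum ⊢
  rw [h2] at hsum
  linarith

lemma count_cell {t : ℕ} (x : Fin t → ZMod 2) (s : ZMod 2) :
    ∑ a : (Fin t → ZMod 2) × ZMod 2, (if (∑ i, a.1 i * x i) + a.2 = s then (1:ℝ) else 0)
      = 2^t := by
  rw [Fintype.sum_prod_type]
  have inner : ∀ m : Fin t → ZMod 2,
      ∑ e : ZMod 2, (if (∑ i, m i * x i) + e = s then (1:ℝ) else 0) = 1 := by
    intro m
    have h2 : ∀ e : ZMod 2, ((∑ i, m i * x i) + e = s) ↔ (e = (∑ i, m i * x i) + s) :=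
      fun e => (by decide : ∀ c s e : ZMod 2, (c + e = s ↔ e = c + s)) _ s e
    simp only [h2]
    simp
  rw [Finset.sum_congr rfl (fun m _ => inner m)]
  simp [Finset.card_univ]

lemma count_cell2 {t : ℕ} (x x' : Fin t → ZMod 2) (hxx : x ≠ x') (s s' : ZMod 2) :
    ∑ a : (Fin t → ZMod 2) × ZMod 2,
      (if ((∑ i, a.1 i * x i) + a.2 = s ∧ (∑ i, a.1 i * x' i) + a.2 = s') then (1:ℝ) else 0)
      = 2^(t-1) := by
  rw [Fintype.sum_prod_type]
  have inner : ∀ m : Fin t → ZMod 2,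
      ∑ e : ZMod 2, (if ((∑ i, m i * x i) + e = s ∧ (∑ i, m i * x' i) + e = s') then (1:ℝ) else 0)
      = if (∑ i, m i * (x i + x' i)) = s + s' then 1 else 0 := by
    intro m
    have hs : (∑ i, m i * (x i + x' i)) = (∑ i, m i * x i) + (∑ i, m i * x' i) := by
      rw [← Finset.sum_add_distrib]; exact Finset.sum_congr rfl (fun i _ => mul_add _ _ _)
    rw [hs]
    have hc : ∀ e, ((∑ i, m i * x i) + e = s ∧ (∑ i, m i * x' i) + e = s')
        ↔ (e = (∑ i, m i * x i) + s ∧ (∑ i, m i * x i) + (∑ i, m i * x' i) = s + s') :=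
      fun e => (by decide : ∀ c c' s s' e : ZMod 2,
        ((c + e = s ∧ c' + e = s') ↔ (e = c + s ∧ c + c' = s + s'))) _ _ s s' e
    simp only [hc]
    by_cases hss : (∑ i, m i * x i) + (∑ i, m i * x' i) = s + s'
    · simp [hss]
    · simp [hss]
  rw [Finset.sum_congr rfl (fun m _ => inner m)]
  apply count_linear
  intro hzero
  apply hxx
  funext i
  have : x i + x' i = 0 := congrFun hzero i
  revert this; generalize x i = p; generalize x' i = q; revert p q; decide

/-- The type of affine maps used for restriction. -/
abbrev Aff (r t : ℕ) := Fin r → ((Fin t → ZMod 2) × ZMod 2)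

def affZ {r t : ℕ} (A : Aff r t) (u : Fin t → Bool) (j : Fin r) : ZMod 2 :=
  (∑ i, (A j).1 i * b2f (u i)) + (A j).2

def affG {r t : ℕ} (A : Aff r t) (u : Fin t → Bool) (j : Fin r) : Bool :=
  decide (affZ A u j = 1)

lemma count_one {r t : ℕ} (u : Fin t → Bool) (w : Fin r → Bool) :
    ∑ A : Aff r t, (if affG A u = w then (1:ℝ) else 0) = 2^(r*t) := by
  classical
  have step : ∀ A : Aff r t, (if affG A u = w then (1:ℝ) else 0)
      = ∏ j, (if (∑ i, (A j).1 i * b2f (u i)) + (A j).2 = b2f (w j) then (1:ℝ) else 0) := by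
    intro A
    rw [Fintype.prod_boole]
    congr 1
    simp only [eq_iff_iff]
    rw [funext_iff]
    exact forall_congr' fun j => b2f_decide_eq _ _
  set h : Fin r → ((Fin t → ZMod 2) × ZMod 2) → ℝ :=
    fun j a => if (∑ i, a.1 i * b2f (u i)) + a.2 = b2f (w j) then (1:ℝ) else 0 with hh
  have step2 : ∑ A : Aff r t, (if affG A u = w then (1:ℝ) else 0)
      = ∑ A ∈ Fintype.piFinset (fun _ : Fin r => (Finset.univ : Finset ((Fin t → ZMod 2) × ZMod 2))),
          ∏ j, h j (A j) := by
    rw [Fintype.piFinset_univ]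
    exact Finset.sum_congr rfl (fun A _ => step A)
  rw [step2, ← Finset.prod_univ_sum (fun _ => Finset.univ) h]
  rw [Finset.prod_congr rfl (fun j _ => count_cell (fun i => b2f (u i)) (b2f (w j)))]
  rw [Finset.prod_const]
  simp [← pow_mul, Nat.mul_comm]

lemma count_two {r t : ℕ} {u u' : Fin t → Bool} (huu : u ≠ u') (w w' : Fin r → Bool) :
    ∑ A : Aff r t, (if (affG A u = w ∧ affG A u' = w') then (1:ℝ) else 0) = 2^(r*(t-1)) := by
  classical
  have step : ∀ A : Aff r t, (if (affG A u = w ∧ affG A u' = w') then (1:ℝ) else 0)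
      = ∏ j, (if ((∑ i, (A j).1 i * b2f (u i)) + (A j).2 = b2f (w j)
          ∧ (∑ i, (A j).1 i * b2f (u' i)) + (A j).2 = b2f (w' j)) then (1:ℝ) else 0) := by
    intro A
    rw [Fintype.prod_boole]
    congr 1
    simp only [eq_iff_iff]
    rw [funext_iff, funext_iff, ← forall_and]
    exact forall_congr' fun j => and_congr (b2f_decide_eq _ _) (b2f_decide_eq _ _)
  have hxx : (fun i => b2f (u i)) ≠ (fun i => b2f (u' i)) := by
    intro hcon
    apply huu
    funext i
    have := congrFun hcon i
    revert this; cases u i <;> cases u' i <;> decide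
  set h : Fin r → ((Fin t → ZMod 2) × ZMod 2) → ℝ :=
    fun j a => if ((∑ i, a.1 i * b2f (u i)) + a.2 = b2f (w j)
        ∧ (∑ i, a.1 i * b2f (u' i)) + a.2 = b2f (w' j)) then (1:ℝ) else 0 with hh
  have step2 : ∑ A : Aff r t, (if (affG A u = w ∧ affG A u' = w') then (1:ℝ) else 0)
      = ∑ A ∈ Fintype.piFinset (fun _ : Fin r => (Finset.univ : Finset ((Fin t → ZMod 2) × ZMod 2))),
          ∏ j, h j (A j) := by
    rw [Fintype.piFinset_univ]
    exact Finset.sum_congr rfl (fun A _ => step A)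
  rw [step2, ← Finset.prod_univ_sum (fun _ => Finset.univ) h]
  rw [Finset.prod_congr rfl (fun j _ => count_cell2 _ _ hxx (b2f (w j)) (b2f (w' j)))]
  rw [Finset.prod_const]
  simp [← pow_mul, Nat.mul_comm]

lemma totalDegree_bind₁_le {σ τ : Type*} {R : Type*} [CommSemiring R]
    (g : σ → MvPolynomial τ R) (hg : ∀ j, (g j).totalDegree ≤ 1)
    (p : MvPolynomial σ R) : (bind₁ g p).totalDegree ≤ p.totalDegree := by
  conv_lhs => rw [p.as_sum]
  rw [map_sum]
  apply totalDegree_finsetSum_le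
  intro v hv
  rw [bind₁_monomial]
  refine (totalDegree_mul _ _).trans ?_
  rw [totalDegree_C, zero_add]
  refine (totalDegree_finset_prod _ _).trans ?_
  calc ∑ i ∈ v.support, ((g i)^(v i)).totalDegree
      ≤ ∑ i ∈ v.support, v i := by
        refine Finset.sum_le_sum (fun i _ => ?_)
        refine (totalDegree_pow _ _).trans ?_
        calc v i * (g i).totalDegree ≤ v i * 1 := Nat.mul_le_mul_left _ (hg i)
          _ = v i := Nat.mul_one _
    _ ≤ p.totalDegree := by
        have := MvPolynomial.le_totalDegree (p := p) (s := v) hv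
        simpa [Finsupp.sum] using this

lemma eval_bind₁' {σ τ : Type*} {R : Type*} [CommSemiring R]
    (f : τ → R) (g : σ → MvPolynomial τ R) (φ : MvPolynomial σ R) :
    eval f (bind₁ g φ) = eval (fun i => eval f (g i)) φ :=
  eval₂Hom_bind₁ _ _ _ _

lemma boole_mul_boole (p q : Prop) [Decidable p] [Decidable q] :
    (if p then (1:ℝ) else 0) * (if q then (1:ℝ) else 0) = if p ∧ q then (1:ℝ) else 0 := by
  by_cases hp : p <;> by_cases hq : q <;> simp [hp, hq]

section moments
variable {r t n : ℕ} (f : (Fin r → Bool) → (Fin n → Bool)) (x : Fin n → Bool)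

noncomputable def Sg : ℝ := ∑ w : Fin r → Bool, (if f w = x then (1:ℝ) else 0)

lemma expand_ind (A : Aff r t) (u : Fin t → Bool) :
    (if f (affG A u) = x then (1:ℝ) else 0)
      = ∑ w : Fin r → Bool, (if affG A u = w then (1:ℝ) else 0) * (if f w = x then (1:ℝ) else 0) := by
  classical
  rw [Finset.sum_congr rfl (fun w _ => boole_mul ((affG A u) = w) _)]
  rw [Finset.sum_ite_eq]
  simp

lemma sumA_one (u : Fin t → Bool) :
    ∑ A : Aff r t, (if f (affG A u) = x then (1:ℝ) else 0) = 2^(r*t) * Sg f x := by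
  classical
  rw [Finset.sum_congr rfl (fun A _ => expand_ind f x A u), Finset.sum_comm]
  rw [Finset.sum_congr rfl (fun w _ => (Finset.sum_mul _ _ _).symm)]
  rw [Finset.sum_congr rfl (fun w (_ : w ∈ Finset.univ) => by rw [count_one u w])]
  rw [← Finset.mul_sum]
  rfl

lemma sumA_two {u u' : Fin t → Bool} (huu : u ≠ u') :
    ∑ A : Aff r t, (if f (affG A u) = x then (1:ℝ) else 0) * (if f (affG A u') = x then (1:ℝ) else 0)
      = 2^(r*(t-1)) * Sg f x * Sg f x := by
  classical
  have expand2 : ∀ A : Aff r t,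
      (if f (affG A u) = x then (1:ℝ) else 0) * (if f (affG A u') = x then (1:ℝ) else 0)
      = ∑ w : Fin r → Bool, ∑ w' : Fin r → Bool,
          (if (affG A u = w ∧ affG A u' = w') then (1:ℝ) else 0)
            * ((if f w = x then (1:ℝ) else 0) * (if f w' = x then (1:ℝ) else 0)) := by
    intro A
    rw [expand_ind f x A u, expand_ind f x A u', Finset.sum_mul_sum]
    refine Finset.sum_congr rfl (fun w _ => Finset.sum_congr rfl (fun w' _ => ?_))
    rw [← boole_mul_boole]
    ring
  rw [Finset.sum_congr rfl (fun A _ => expand2 A), Finset.sum_comm]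
  rw [Finset.sum_congr rfl (fun w (_ : w ∈ Finset.univ) => Finset.sum_comm)]
  have inner : ∀ w w' : Fin r → Bool,
      ∑ A : Aff r t, (if (affG A u = w ∧ affG A u' = w') then (1:ℝ) else 0)
        * ((if f w = x then (1:ℝ) else 0) * (if f w' = x then (1:ℝ) else 0))
      = 2^(r*(t-1)) * ((if f w = x then (1:ℝ) else 0) * (if f w' = x then (1:ℝ) else 0)) := by
    intro w w'
    rw [← Finset.sum_mul, count_two huu]
  rw [Finset.sum_congr rfl (fun w (_ : w ∈ Finset.univ) =>
    Finset.sum_congr rfl (fun w' (_ : w' ∈ Finset.univ) => inner w w'))]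
  simp only [← Finset.mul_sum, ← Finset.sum_mul]
  rw [Sg]
  ring

lemma card_Aff : (Fintype.card (Aff r t) : ℝ) = 2^(r*(t+1)) := by
  have : Fintype.card (Aff r t) = (2^t * 2)^r := by
    rw [Fintype.card_fun, Fintype.card_prod, Fintype.card_fun]
    simp [ZMod.card]
  rw [this]
  push_cast
  rw [← pow_succ, ← pow_mul, Nat.mul_comm]

lemma Sg_nonneg : 0 ≤ Sg f x := Finset.sum_nonneg (fun w _ => by positivity)

lemma sumA_sq_le :
    ∑ A : Aff r t, (∑ u : Fin t → Bool, if f (affG A u) = x then (1:ℝ) else 0)^2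
      ≤ 2^t * 2^(r*t) * Sg f x + 2^t * 2^t * 2^(r*(t-1)) * (Sg f x * Sg f x) := by
  classical
  have hsq : ∀ A : Aff r t,
      (∑ u : Fin t → Bool, if f (affG A u) = x then (1:ℝ) else 0)^2
      = ∑ u : Fin t → Bool, ∑ u' : Fin t → Bool,
          (if f (affG A u) = x then (1:ℝ) else 0) * (if f (affG A u') = x then (1:ℝ) else 0) := by
    intro A; rw [sq, Finset.sum_mul_sum]
  rw [Finset.sum_congr rfl (fun A _ => hsq A), Finset.sum_comm]
  rw [Finset.sum_congr rfl (fun u (_ : u ∈ Finset.univ) => Finset.sum_comm)]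
  have hdiag : ∀ u : Fin t → Bool,
      ∑ A : Aff r t, (if f (affG A u) = x then (1:ℝ) else 0) * (if f (affG A u) = x then (1:ℝ) else 0)
      = 2^(r*t) * Sg f x := by
    intro u
    rw [show (∑ A : Aff r t, (if f (affG A u) = x then (1:ℝ) else 0) * (if f (affG A u) = x then (1:ℝ) else 0))
        = ∑ A : Aff r t, (if f (affG A u) = x then (1:ℝ) else 0) from
      Finset.sum_congr rfl (fun A _ => by by_cases hfa : f (affG A u) = x <;> simp [hfa])]
    exact sumA_one f x u
  have hbound : ∀ u : Fin t → Bool,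
      ∑ u' : Fin t → Bool, ∑ A : Aff r t,
        (if f (affG A u) = x then (1:ℝ) else 0) * (if f (affG A u') = x then (1:ℝ) else 0)
      ≤ 2^(r*t) * Sg f x + 2^t * 2^(r*(t-1)) * (Sg f x * Sg f x) := by
    intro u
    rw [← Finset.add_sum_erase _ _ (Finset.mem_univ u), hdiag u]
    have herase : ∑ u' ∈ Finset.univ.erase u, ∑ A : Aff r t,
        (if f (affG A u) = x then (1:ℝ) else 0) * (if f (affG A u') = x then (1:ℝ) else 0)
        ≤ 2^t * 2^(r*(t-1)) * (Sg f x * Sg f x) := by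
      have : ∀ u' ∈ Finset.univ.erase u, ∑ A : Aff r t,
          (if f (affG A u) = x then (1:ℝ) else 0) * (if f (affG A u') = x then (1:ℝ) else 0)
          = 2^(r*(t-1)) * Sg f x * Sg f x := by
        intro u' hu'
        exact sumA_two f x (Ne.symm (Finset.ne_of_mem_erase hu'))
      rw [Finset.sum_congr rfl this, Finset.sum_const, nsmul_eq_mul]
      have hcard : ((Finset.univ.erase u).card : ℝ) ≤ 2^t := by
        have := Finset.card_erase_le (s := (Finset.univ : Finset (Fin t → Bool))) (a := u)
        have h2 : (Finset.univ : Finset (Fin t → Bool)).card = 2^t := by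
          simp [Finset.card_univ]
        calc ((Finset.univ.erase u).card : ℝ) ≤ ((Finset.univ : Finset (Fin t → Bool)).card : ℝ) := by
              exact_mod_cast this
          _ = 2^t := by rw [h2]; push_cast; ring
      have hnn : (0:ℝ) ≤ 2^(r*(t-1)) * Sg f x * Sg f x := by
        have := Sg_nonneg f x; positivity
      calc ((Finset.univ.erase u).card : ℝ) * (2^(r*(t-1)) * Sg f x * Sg f x)
          ≤ 2^t * (2^(r*(t-1)) * Sg f x * Sg f x) :=
            mul_le_mul_of_nonneg_right hcard hnn
        _ = 2^t * 2^(r*(t-1)) * (Sg f x * Sg f x) := by ring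
    linarith
  calc ∑ u : Fin t → Bool, ∑ u' : Fin t → Bool, ∑ A : Aff r t,
        (if f (affG A u) = x then (1:ℝ) else 0) * (if f (affG A u') = x then (1:ℝ) else 0)
      ≤ ∑ _u : Fin t → Bool, (2^(r*t) * Sg f x + 2^t * 2^(r*(t-1)) * (Sg f x * Sg f x)) :=
        Finset.sum_le_sum (fun u _ => hbound u)
    _ = 2^t * 2^(r*t) * Sg f x + 2^t * 2^t * 2^(r*(t-1)) * (Sg f x * Sg f x) := by
        rw [Finset.sum_const, nsmul_eq_mul, Finset.card_univ]
        have : (Fintype.card (Fin t → Bool) : ℝ) = 2^t := by simp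
        rw [this]; ring

lemma sumA_S :
    ∀ u0 : True, -- dummy
    ∑ A : Aff r t, (∑ u : Fin t → Bool, if f (affG A u) = x then (1:ℝ) else 0)
      = 2^t * (2^(r*t) * Sg f x) := by
  intro _
  rw [Finset.sum_comm]
  rw [Finset.sum_congr rfl (fun u (_ : u ∈ Finset.univ) => sumA_one f x u)]
  rw [Finset.sum_const, nsmul_eq_mul, Finset.card_univ]
  have : (Fintype.card (Fin t → Bool) : ℝ) = 2^t := by simp
  rw [this]

lemma var_bound (ht : 1 ≤ t) :
    ∑ A : Aff r t,
      ((((2:ℝ)^t)⁻¹ * ∑ u : Fin t → Bool, if f (affG A u) = x then (1:ℝ) else 0)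
        - ((2:ℝ)^r)⁻¹ * Sg f x)^2
      ≤ 2^(r*t) * ((2:ℝ)^t)⁻¹ * Sg f x := by
  classical
  set c : ℝ := ((2:ℝ)^t)⁻¹ with hc
  set X0 : ℝ := ((2:ℝ)^r)⁻¹ * Sg f x with hX0
  have hexp : ∑ A : Aff r t,
      ((c * ∑ u : Fin t → Bool, if f (affG A u) = x then (1:ℝ) else 0) - X0)^2
      = c^2 * (∑ A : Aff r t, (∑ u : Fin t → Bool, if f (affG A u) = x then (1:ℝ) else 0)^2)
        - (2*c*X0) * (∑ A : Aff r t, (∑ u : Fin t → Bool, if f (affG A u) = x then (1:ℝ) else 0))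
        + (Fintype.card (Aff r t) : ℝ) * X0^2 := by
    rw [Finset.sum_congr rfl (fun A _ =>
      show ((c * ∑ u : Fin t → Bool, if f (affG A u) = x then (1:ℝ) else 0) - X0)^2
        = c^2 * (∑ u : Fin t → Bool, if f (affG A u) = x then (1:ℝ) else 0)^2
          - (2*c*X0) * (∑ u : Fin t → Bool, if f (affG A u) = x then (1:ℝ) else 0) + X0^2
      from by ring)]
    rw [Finset.sum_add_distrib, Finset.sum_sub_distrib, ← Finset.mul_sum, ← Finset.mul_sum,
      Finset.sum_const, nsmul_eq_mul, Finset.card_univ]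
  rw [hexp, sumA_S f x trivial, card_Aff]
  have hS2 := sumA_sq_le f x (t := t)
  have hsgnn := Sg_nonneg f x
  have hc2 : (0:ℝ) ≤ c^2 := sq_nonneg c
  have hstep : c^2 * (∑ A : Aff r t, (∑ u : Fin t → Bool, if f (affG A u) = x then (1:ℝ) else 0)^2)
      ≤ c^2 * (2^t * 2^(r*t) * Sg f x + 2^t * 2^t * 2^(r*(t-1)) * (Sg f x * Sg f x)) :=
    mul_le_mul_of_nonneg_left hS2 hc2
  have hkey : c^2 * (2^t * 2^(r*t) * Sg f x + 2^t * 2^t * 2^(r*(t-1)) * (Sg f x * Sg f x))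
      - (2*c*X0) * (2^t * (2^(r*t) * Sg f x)) + (2:ℝ)^(r*(t+1)) * X0^2
      = 2^(r*t) * c * Sg f x := by
    have hrt : (2:ℝ)^(r*t) = 2^(r*(t-1)) * 2^r := by
      rw [← pow_add]; congr 1
      have : t - 1 + 1 = t := by omega
      calc r * t = r * ((t-1) + 1) := by rw [this]
        _ = r*(t-1) + r := by ring
    have hrt1 : (2:ℝ)^(r*(t+1)) = 2^(r*(t-1)) * 2^r * 2^r := by
      rw [← pow_add, ← pow_add]; congr 1
      have : t - 1 + 1 = t := by omega
      calc r * (t+1) = r * ((t-1) + 1) + r := by rw [this]; ring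
        _ = r*(t-1) + r + r := by ring
    rw [hX0, hc, hrt, hrt1]
    have hT : ((2:ℝ)^t) ≠ 0 := by positivity
    have hR : ((2:ℝ)^r) ≠ 0 := by positivity
    field_simp
    ring
  linarith

end moments

end Aux

set_option maxHeartbeats 2000000

theorem stmt6 (n d k : ℕ) (hn : 0 < n) (hd : 0 < d) (hk : 0 < k)
    (a b : ℝ) (ha : a ∈ Set.Icc (0 : ℝ) 1) (hb : b ∈ Set.Icc (0 : ℝ) 1)
    (Iso : (Fin n → Bool) → Bool)
    (h : IsIsolator (polySourceAtMostInputs d (4 * (k + 1)) n) Iso a b ((k : ℝ) - 1)) :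
    IsIsolator (polySource d n) Iso a (b + ((2 : ℝ) ^ k)⁻¹) (k : ℝ) := by
  classical
  obtain ⟨h1, h2⟩ := h
  refine ⟨h1, ?_⟩
  intro X hX
  simp only [polySource, polySourceExact, Set.mem_setOf_eq] at hX
  obtain ⟨r, hr, P, hP, rfl⟩ := hX
  set t := 4*(k+1) with ht_def
  have ht1 : 1 ≤ t := by omega
  set q : ℝ := (2:ℝ)^k with hq_def
  have hq0 : (0:ℝ) < q := by positivity
  have hrpow : (2:ℝ)^(-(k:ℝ)) = q⁻¹ := by
    rw [Real.rpow_neg (by norm_num), Real.rpow_natCast]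
  have hθ : (2:ℝ)^(-((k:ℝ)-1)) = 2*q⁻¹ := by
    rw [show -((k:ℝ)-1) = 1 - (k:ℝ) by ring, Real.rpow_sub (by norm_num), Real.rpow_one,
      Real.rpow_natCast, div_eq_mul_inv]
  set f : (Fin r → Bool) → (Fin n → Bool) :=
    fun u i => decide (MvPolynomial.eval (fun j => b2f (u j)) (P i) = 1) with hf_def
  set Y : Aff r t → (Fin n → Bool) → ℝ :=
    fun A => push (fun u => f (affG A u)) (unif (Fin t → Bool)) with hY_def
  -- values
  have hcardT : ((Fintype.card (Fin t → Bool)) : ℝ) = 2^t := by simp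
  have hcardR : ((Fintype.card (Fin r → Bool)) : ℝ) = 2^r := by simp
  have hXval : ∀ x, push f (unif (Fin r → Bool)) x = ((2:ℝ)^r)⁻¹ * Sg f x := by
    intro x
    simp only [push, unif, Sg]
    rw [Finset.mul_sum]
    refine Finset.sum_congr rfl (fun w _ => ?_)
    by_cases hw : f w = x <;> simp [hw, hcardR]
  have hYval : ∀ A x, Y A x
      = ((2:ℝ)^t)⁻¹ * ∑ u : Fin t → Bool, (if f (affG A u) = x then (1:ℝ) else 0) := by
    intro A x
    simp only [hY_def, push, unif]
    rw [Finset.mul_sum]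
    refine Finset.sum_congr rfl (fun u _ => ?_)
    by_cases hw : f (affG A u) = x <;> simp [hw, hcardT]
  have hY0 : ∀ A x, 0 ≤ Y A x := by
    intro A x
    rw [hYval]
    have : (0:ℝ) ≤ ∑ u : Fin t → Bool, (if f (affG A u) = x then (1:ℝ) else 0) :=
      Finset.sum_nonneg (fun u _ => by positivity)
    positivity
  have hY1 : ∀ A x, Y A x ≤ 1 := by
    intro A x
    rw [hYval]
    have hle : ∑ u : Fin t → Bool, (if f (affG A u) = x then (1:ℝ) else 0)
        ≤ ∑ _u : Fin t → Bool, (1:ℝ) := by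
      refine Finset.sum_le_sum (fun u _ => ?_)
      by_cases hw : f (affG A u) = x <;> simp [hw]
    rw [Finset.sum_const, nsmul_eq_mul, Finset.card_univ, hcardT, mul_one] at hle
    calc ((2:ℝ)^t)⁻¹ * ∑ u : Fin t → Bool, (if f (affG A u) = x then (1:ℝ) else 0)
        ≤ ((2:ℝ)^t)⁻¹ * (2^t) := by
          refine mul_le_mul_of_nonneg_left hle (by positivity)
      _ = 1 := by field_simp
  have hXsum : ∑ x : Fin n → Bool, push f (unif (Fin r → Bool)) x = 1 := by
    simp only [push, unif]
    rw [Finset.sum_comm]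
    simp [hcardR]
  have hXnn : ∀ x, 0 ≤ push f (unif (Fin r → Bool)) x := by
    intro x
    rw [hXval x]
    have := Sg_nonneg f x
    positivity
  -- membership of restricted sources
  have hmem : ∀ A : Aff r t, Y A ∈ polySourceAtMostInputs d (4*(k+1)) n := by
    intro A
    simp only [polySourceAtMostInputs, polySourceExact, Set.mem_setOf_eq]
    refine ⟨t, by omega, le_rfl, ?_⟩
    refine ⟨fun i => MvPolynomial.bind₁
      (fun j => (∑ i' : Fin t, MvPolynomial.C ((A j).1 i') * MvPolynomial.X i')
        + MvPolynomial.C ((A j).2)) (P i), ?_, ?_⟩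
    · intro i
      refine (totalDegree_bind₁_le _ ?_ _).trans (hP i)
      intro j
      refine (MvPolynomial.totalDegree_add _ _).trans ?_
      rw [MvPolynomial.totalDegree_C]
      rw [max_le_iff]
      refine ⟨?_, by omega⟩
      refine MvPolynomial.totalDegree_finsetSum_le (fun i' _ => ?_)
      refine (MvPolynomial.totalDegree_mul _ _).trans ?_
      rw [MvPolynomial.totalDegree_C, MvPolynomial.totalDegree_X]
    · have hmap : (fun (u : Fin t → Bool) (i : Fin n) => decide ((MvPolynomial.eval fun j => b2f (u j))
            ((MvPolynomial.bind₁
              (fun j => (∑ i' : Fin t, MvPolynomial.C ((A j).1 i') * MvPolynomial.X i')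
                + MvPolynomial.C ((A j).2))) (P i)) = 1))
          = fun u => f (affG A u) := by
        funext u i
        rw [eval_bind₁']
        have harg : (fun j => MvPolynomial.eval (fun j' => b2f (u j'))
            ((∑ i' : Fin t, MvPolynomial.C ((A j).1 i') * MvPolynomial.X i')
              + MvPolynomial.C ((A j).2)))
            = fun j => b2f (affG A u j) := by
          funext j
          rw [map_add, MvPolynomial.eval_C, map_sum]
          have hterm : ∀ i' : Fin t, MvPolynomial.eval (fun j' => b2f (u j'))
              (MvPolynomial.C ((A j).1 i') * MvPolynomial.X i') = (A j).1 i' * b2f (u i') :=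
            fun i' => by rw [map_mul, MvPolynomial.eval_C, MvPolynomial.eval_X]
          rw [Finset.sum_congr rfl (fun i' _ => hterm i')]
          show affZ A u j = b2f (affG A u j)
          simp only [affG]
          exact (b2f_decide (affZ A u j)).symm
        rw [harg]
      rw [hY_def, hmap]
  -- abbreviations
  set XX : (Fin n → Bool) → ℝ := push f (unif (Fin r → Bool)) with hXX_def
  set N : ℝ := (2:ℝ)^(r*(t+1)) with hN_def
  have hN0 : (0:ℝ) < N := by rw [hN_def]; positivity
  have hT0 : (0:ℝ) < (2:ℝ)^t := by positivity
  have hR0 : (0:ℝ) < (2:ℝ)^r := by positivity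
  have hsplit : N = 2^(r*t) * (2:ℝ)^r := by
    rw [hN_def, show r*(t+1) = r*t + r by ring, pow_add]
  -- first moment
  have hF1 : ∀ x, ∑ A : Aff r t, Y A x = N * XX x := by
    intro x
    rw [Finset.sum_congr rfl (fun A _ => hYval A x), ← Finset.mul_sum, sumA_S f x trivial,
      hXval x, hsplit]
    field_simp
  -- variance bound
  have hvar : ∀ x, ∑ A : Aff r t, (Y A x - XX x)^2 ≤ N * ((2:ℝ)^t)⁻¹ * XX x := by
    intro x
    have hvb := var_bound f x ht1
    have heq : ∀ A : Aff r t, (Y A x - XX x)^2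
        = ((((2:ℝ)^t)⁻¹ * ∑ u : Fin t → Bool, if f (affG A u) = x then (1:ℝ) else 0)
            - ((2:ℝ)^r)⁻¹ * Sg f x)^2 := by
      intro A; rw [hYval A x, hXval x]
    rw [Finset.sum_congr rfl (fun A _ => heq A)]
    refine hvb.trans (le_of_eq ?_)
    rw [hXval x, hsplit]
    field_simp
  -- bound from the hypothesis isolator
  have hb_use : ∀ A : Aff r t,
      (∑ x : Fin n → Bool, if Y A x ≤ 2*q⁻¹ ∧ Iso x = true then Y A x else 0) ≤ b := by
    intro A
    have hYA := h2 (Y A) (hmem A)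
    refine le_trans (le_of_eq ?_) hYA
    simp only [prob]
    refine Finset.sum_congr rfl (fun x _ => ?_)
    by_cases hc : Y A x ≤ 2*q⁻¹ ∧ Iso x = true
    · rw [if_pos hc, if_pos]
      show Y A x ≤ (2:ℝ)^(-((k:ℝ)-1)) ∧ Iso x = true
      rw [hθ]; exact hc
    · rw [if_neg hc, if_neg]
      intro hmem'
      apply hc
      have : Y A x ≤ (2:ℝ)^(-((k:ℝ)-1)) ∧ Iso x = true := hmem'
      rw [hθ] at this; exact this
  -- per-A pointwise bound
  have hptA : ∀ A : Aff r t,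
      (∑ x : Fin n → Bool, if XX x ≤ q⁻¹ ∧ Iso x = true then Y A x else 0)
      ≤ b + q^2 * ∑ x : Fin n → Bool,
          (if XX x ≤ q⁻¹ ∧ Iso x = true then (Y A x - XX x)^2 else 0) := by
    intro A
    have hpt : ∀ x : Fin n → Bool,
        (if XX x ≤ q⁻¹ ∧ Iso x = true then Y A x else 0)
        ≤ (if Y A x ≤ 2*q⁻¹ ∧ Iso x = true then Y A x else 0)
          + q^2 * (if XX x ≤ q⁻¹ ∧ Iso x = true then (Y A x - XX x)^2 else 0) := by
      intro x
      by_cases hxE : XX x ≤ q⁻¹ ∧ Iso x = true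
      · rw [if_pos hxE, if_pos hxE]
        by_cases hYle : Y A x ≤ 2*q⁻¹
        · rw [if_pos ⟨hYle, hxE.2⟩]
          nlinarith [sq_nonneg (Y A x - XX x), sq_nonneg q]
        · rw [if_neg (fun hcon => hYle hcon.1)]
          push_neg at hYle
          have hYX : q⁻¹ ≤ Y A x - XX x := by
            have hXle := hxE.1
            linarith
          have h1q : (1:ℝ) ≤ q * (Y A x - XX x) := by
            calc (1:ℝ) = q * q⁻¹ := by field_simp
              _ ≤ q * (Y A x - XX x) := mul_le_mul_of_nonneg_left hYX (le_of_lt hq0)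
          nlinarith [hY1 A x, h1q]
      · rw [if_neg hxE, if_neg hxE]
        have hnn : (0:ℝ) ≤ (if Y A x ≤ 2*q⁻¹ ∧ Iso x = true then Y A x else 0) := by
          split_ifs with hc
          · exact hY0 A x
          · exact le_refl 0
        nlinarith [hnn]
    calc (∑ x : Fin n → Bool, if XX x ≤ q⁻¹ ∧ Iso x = true then Y A x else 0)
        ≤ ∑ x : Fin n → Bool, ((if Y A x ≤ 2*q⁻¹ ∧ Iso x = true then Y A x else 0)
            + q^2 * (if XX x ≤ q⁻¹ ∧ Iso x = true then (Y A x - XX x)^2 else 0)) :=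
          Finset.sum_le_sum (fun x _ => hpt x)
      _ = (∑ x : Fin n → Bool, if Y A x ≤ 2*q⁻¹ ∧ Iso x = true then Y A x else 0)
          + q^2 * ∑ x : Fin n → Bool,
              (if XX x ≤ q⁻¹ ∧ Iso x = true then (Y A x - XX x)^2 else 0) := by
          rw [Finset.sum_add_distrib, Finset.mul_sum]
      _ ≤ b + q^2 * ∑ x : Fin n → Bool,
              (if XX x ≤ q⁻¹ ∧ Iso x = true then (Y A x - XX x)^2 else 0) :=
          add_le_add_left (hb_use A) _
  -- swap sums
  have hinner : ∀ x, ∑ A : Aff r t, (if XX x ≤ q⁻¹ ∧ Iso x = true then Y A x else 0)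
      = N * (if XX x ≤ q⁻¹ ∧ Iso x = true then XX x else 0) := by
    intro x
    by_cases hxE : XX x ≤ q⁻¹ ∧ Iso x = true
    · simp only [if_pos hxE]; exact hF1 x
    · simp only [if_neg hxE]; simp
  have hswap : ∑ A : Aff r t, (∑ x : Fin n → Bool, if XX x ≤ q⁻¹ ∧ Iso x = true then Y A x else 0)
      = N * ∑ x : Fin n → Bool, (if XX x ≤ q⁻¹ ∧ Iso x = true then XX x else 0) := by
    rw [Finset.sum_comm, Finset.sum_congr rfl (fun x _ => hinner x), ← Finset.mul_sum]
  -- total bound over A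
  have hA_total : ∑ A : Aff r t,
      (∑ x : Fin n → Bool, if XX x ≤ q⁻¹ ∧ Iso x = true then Y A x else 0)
      ≤ N * b + q^2 * (N * ((2:ℝ)^t)⁻¹) := by
    calc ∑ A : Aff r t, (∑ x : Fin n → Bool, if XX x ≤ q⁻¹ ∧ Iso x = true then Y A x else 0)
        ≤ ∑ A : Aff r t, (b + q^2 * ∑ x : Fin n → Bool,
            (if XX x ≤ q⁻¹ ∧ Iso x = true then (Y A x - XX x)^2 else 0)) :=
          Finset.sum_le_sum (fun A _ => hptA A)
      _ = (Fintype.card (Aff r t) : ℝ) * b + q^2 * ∑ A : Aff r t, ∑ x : Fin n → Bool,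
            (if XX x ≤ q⁻¹ ∧ Iso x = true then (Y A x - XX x)^2 else 0) := by
          rw [Finset.sum_add_distrib, Finset.sum_const, nsmul_eq_mul, Finset.card_univ,
            ← Finset.mul_sum]
      _ = N * b + q^2 * ∑ x : Fin n → Bool, ∑ A : Aff r t,
            (if XX x ≤ q⁻¹ ∧ Iso x = true then (Y A x - XX x)^2 else 0) := by
          rw [card_Aff, Finset.sum_comm, ← hN_def]
      _ ≤ N * b + q^2 * ∑ x : Fin n → Bool, (N * ((2:ℝ)^t)⁻¹ * XX x) := by
          refine add_le_add_right (mul_le_mul_of_nonneg_left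
            (Finset.sum_le_sum fun x _ => ?_) (by positivity)) _
          by_cases hPx : XX x ≤ q⁻¹ ∧ Iso x = true
          · simp only [if_pos hPx]; exact hvar x
          · simp only [if_neg hPx, Finset.sum_const_zero]
            have := hXnn x
            positivity
      _ = N * b + q^2 * (N * ((2:ℝ)^t)⁻¹) := by
          rw [← Finset.mul_sum, hXsum, mul_one]
  -- numeric tail bound
  have hlast : q^2 * ((2:ℝ)^t)⁻¹ ≤ q⁻¹ := by
    have e1 : q^2 * q = (2:ℝ)^(3*k) := by
      rw [hq_def, ← pow_mul, ← pow_add]; congr 1; ring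
    have e2 : (2:ℝ)^(3*k) ≤ 2^t := by
      apply pow_le_pow_right₀ (by norm_num)
      omega
    have hpos : (0:ℝ) < q * 2^t := by positivity
    rw [← mul_le_mul_iff_of_pos_right hpos]
    have lhs_eq : q^2 * ((2:ℝ)^t)⁻¹ * (q * 2^t) = q^2 * q := by
      field_simp
    have rhs_eq : q⁻¹ * (q * (2:ℝ)^t) = 2^t := by field_simp
    rw [lhs_eq, rhs_eq, e1]
    exact e2
  -- conclude
  have final : (∑ x : Fin n → Bool, if XX x ≤ q⁻¹ ∧ Iso x = true then XX x else 0)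
      ≤ b + q⁻¹ := by
    have hchain : (∑ x : Fin n → Bool, if XX x ≤ q⁻¹ ∧ Iso x = true then XX x else 0)
        = N⁻¹ * ∑ A : Aff r t,
            (∑ x : Fin n → Bool, if XX x ≤ q⁻¹ ∧ Iso x = true then Y A x else 0) := by
      rw [hswap, ← mul_assoc, inv_mul_cancel₀ (ne_of_gt hN0), one_mul]
    rw [hchain]
    calc N⁻¹ * ∑ A : Aff r t,
          (∑ x : Fin n → Bool, if XX x ≤ q⁻¹ ∧ Iso x = true then Y A x else 0)
        ≤ N⁻¹ * (N * b + q^2 * (N * ((2:ℝ)^t)⁻¹)) :=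
          mul_le_mul_of_nonneg_left hA_total (by positivity)
      _ = b + q^2 * ((2:ℝ)^t)⁻¹ := by
          field_simp
      _ ≤ b + q⁻¹ := by linarith
  refine le_trans (le_of_eq ?_) final
  simp only [prob]
  refine Finset.sum_congr rfl (fun x _ => ?_)
  by_cases hc : XX x ≤ q⁻¹ ∧ Iso x = true
  · rw [if_pos hc, if_pos]
    show XX x ≤ (2:ℝ)^(-(k:ℝ)) ∧ Iso x = true
    rw [hrpow]; exact hc
  · rw [if_neg hc, if_neg]
    intro hmem'
    apply hc
    have : XX x ≤ (2:ℝ)^(-(k:ℝ)) ∧ Iso x = true := hmem'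
    rw [hrpow] at this; exact this
end

section
/- Let Ext: {0,1}^n × {0,1}^n → {0,1}^m be a two-source extractor for min-entropy k₀ with error ε. Let k, k₁, k₂ be reals satisfying k > k₁ + k₂ and k₁ > k₀. Let X and Y be independent distributions on {0,1}^n, and define L = {(x, y) ∈ {0,1}^n × {0,1}^n : Pr[(X, Y) = (x, y)] ≤ 2^{−k}}. Then for every z ∈ {0,1}^m, Pr[(X, Y) ∈ L and Ext(X, Y) = z] ≤ 2^{−(k₂ − n − 1)} + max(2^{−m} + ε, 2^{−(k₁ − k₀)}). -/
open Finset

/-- Two-source extractor for min-entropy `k₀` in each source, with error `ε`. -/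
def IsTwoSourceExtractor {n m : ℕ}
    (Ext : ((Fin n → Bool) × (Fin n → Bool)) → Fin m → Bool) (k₀ ε : ℝ) : Prop :=
  ∀ X Y : (Fin n → Bool) → ℝ, IsDist X → IsDist Y →
    MinEntropyGE X k₀ → MinEntropyGE Y k₀ →
    tv (push Ext (fun p => X p.1 * Y p.2)) (unif (Fin m → Bool)) ≤ ε

private lemma two_rpow_pos (x : ℝ) : (0:ℝ) < (2:ℝ) ^ x :=
  Real.rpow_pos_of_pos (by norm_num) x

private lemma ite_nonneg'' {c : Prop} [Decidable c] {x : ℝ} (hx : 0 ≤ x) :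
    (0:ℝ) ≤ if c then x else 0 := by split <;> simp [hx]

/-- A point mass difference is bounded by total variation for equal-mass measures. -/
private lemma tv_point {β : Type*} [Fintype β] (P Q : β → ℝ)
    (h : ∑ b, P b = ∑ b, Q b) (z : β) : P z ≤ Q z + tv P Q := by
  classical
  have hz := Finset.mem_univ z
  have h1 : (P z - Q z) + ∑ b ∈ univ.erase z, (P b - Q b) = ∑ b, (P b - Q b) :=
    Finset.add_sum_erase _ (fun b => P b - Q b) hz
  have h2 : |P z - Q z| + ∑ b ∈ univ.erase z, |P b - Q b| = ∑ b, |P b - Q b| :=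
    Finset.add_sum_erase _ (fun b => |P b - Q b|) hz
  have h3 : ∑ b, (P b - Q b) = 0 := by rw [Finset.sum_sub_distrib, h, sub_self]
  have h4 : |∑ b ∈ univ.erase z, (P b - Q b)| ≤ ∑ b ∈ univ.erase z, |P b - Q b| :=
    Finset.abs_sum_le_sum_abs _ _
  have h5 : ∑ b ∈ univ.erase z, (P b - Q b) = -(P z - Q z) := by linarith
  rw [h5, abs_neg] at h4
  have h6 : P z - Q z ≤ |P z - Q z| := le_abs_self _
  have h7 : tv P Q = (∑ b, |P b - Q b|) / 2 := rfl
  linarith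

private lemma sum_prod_mul {γ δ : Type*} [Fintype γ] [Fintype δ] (f : γ → ℝ) (g : δ → ℝ) :
    ∑ a : γ × δ, f a.1 * g a.2 = (∑ x, f x) * ∑ y, g y := by
  rw [Fintype.sum_prod_type, Finset.sum_mul_sum]

/-- Union bound for three events. -/
private lemma prob_union3 {γ : Type*} [Fintype γ] (w : γ → ℝ) (hw : ∀ a, 0 ≤ w a)
    {E F G H : Set γ} (hc : ∀ a, a ∈ E → a ∈ F ∨ a ∈ G ∨ a ∈ H) :
    prob w E ≤ prob w F + prob w G + prob w H := by
  classical
  simp only [prob]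
  rw [← Finset.sum_add_distrib, ← Finset.sum_add_distrib]
  apply Finset.sum_le_sum
  intro a _
  have h0 : ∀ (S : Set γ), (0:ℝ) ≤ if a ∈ S then w a else 0 := fun S => by
    split
    · exact hw a
    · exact le_rfl
  by_cases hE : a ∈ E
  · rw [if_pos hE]
    rcases hc a hE with h | h | h
    · have hG := h0 G; have hH := h0 H
      rw [if_pos h]; linarith
    · have hF := h0 F; have hH := h0 H
      rw [if_pos h]; linarith
    · have hF := h0 F; have hG := h0 G
      rw [if_pos h]; linarith
  · rw [if_neg hE]
    have hF := h0 F; have hG := h0 G; have hH := h0 H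
    linarith

theorem stmt13 (n m : ℕ)
    (Ext : ((Fin n → Bool) × (Fin n → Bool)) → Fin m → Bool)
    (k₀ ε : ℝ) (hExt : IsTwoSourceExtractor Ext k₀ ε)
    (k k₁ k₂ : ℝ) (hk : k₁ + k₂ < k) (hk₁ : k₀ < k₁)
    (X Y : (Fin n → Bool) → ℝ) (hX : IsDist X) (hY : IsDist Y)
    (z : Fin m → Bool) :
    prob (fun p : (Fin n → Bool) × (Fin n → Bool) => X p.1 * Y p.2)
        {p | X p.1 * Y p.2 ≤ (2 : ℝ) ^ (-k) ∧ Ext p = z}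
      ≤ (2 : ℝ) ^ (-(k₂ - (n : ℝ) - 1)) +
        max ((2 : ℝ) ^ (-(m : ℝ)) + ε) ((2 : ℝ) ^ (-(k₁ - k₀))) := by
  classical
  obtain ⟨hX0, hX1⟩ := hX
  obtain ⟨hY0, hY1⟩ := hY
  set τ : ℝ := k - k₂ with hτdef
  set W : (Fin n → Bool) × (Fin n → Bool) → ℝ := fun p => X p.1 * Y p.2 with hWdef
  have hW0 : ∀ p, 0 ≤ W p := fun p => mul_nonneg (hX0 _) (hY0 _)
  have hcard : ((Fintype.card (Fin n → Bool) : ℕ) : ℝ) = (2:ℝ)^(n:ℝ) := by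
    rw [show Fintype.card (Fin n → Bool) = 2^n by simp]
    push_cast
    exact (Real.rpow_natCast 2 n).symm
  -- the three events
  set E1 : Set ((Fin n → Bool) × (Fin n → Bool)) :=
    {p | X p.1 * Y p.2 ≤ (2:ℝ)^(-k) ∧ (2:ℝ)^(-τ) < Y p.2} with hE1def
  set E2 : Set ((Fin n → Bool) × (Fin n → Bool)) :=
    {p | X p.1 ≤ (2:ℝ)^(-k₁) ∧ Y p.2 ≤ (2:ℝ)^(-τ) ∧ Ext p = z} with hE2def
  set E3 : Set ((Fin n → Bool) × (Fin n → Bool)) :=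
    {p | Y p.2 ≤ (2:ℝ)^(k₁ - k)} with hE3def
  -- cover
  have hcover : ∀ p, p ∈ {p : (Fin n → Bool) × (Fin n → Bool) |
      X p.1 * Y p.2 ≤ (2:ℝ)^(-k) ∧ Ext p = z} → p ∈ E1 ∨ p ∈ E2 ∨ p ∈ E3 := by
    intro p hp
    obtain ⟨hlight, hz⟩ := hp
    by_cases hy : (2:ℝ)^(-τ) < Y p.2
    · exact Or.inl ⟨hlight, hy⟩
    push_neg at hy
    by_cases hx : X p.1 ≤ (2:ℝ)^(-k₁)
    · exact Or.inr (Or.inl ⟨hx, hy, hz⟩)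
    push_neg at hx
    right; right
    show Y p.2 ≤ (2:ℝ)^(k₁ - k)
    have h1 : (2:ℝ)^(-k₁) * Y p.2 ≤ X p.1 * Y p.2 :=
      mul_le_mul_of_nonneg_right hx.le (hY0 _)
    have h2 : (2:ℝ)^(-k₁) * Y p.2 ≤ (2:ℝ)^(-k) := h1.trans hlight
    have h3 : Y p.2 ≤ (2:ℝ)^(-k) / (2:ℝ)^(-k₁) := (le_div_iff₀' (two_rpow_pos _)).mpr h2
    calc Y p.2 ≤ (2:ℝ)^(-k) / (2:ℝ)^(-k₁) := h3
      _ = (2:ℝ)^(k₁ - k) := by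
          rw [← Real.rpow_sub (by norm_num)]
          congr 1; ring
  have hmain := prob_union3 W hW0 hcover
  -- bound on E3
  have hE3 : prob W E3 ≤ (2:ℝ)^((n:ℝ) + k₁ - k) := by
    simp only [prob, hE3def, Set.mem_setOf_eq, hWdef]
    rw [Fintype.sum_prod_type]
    have e1 : ∀ x : Fin n → Bool,
        (∑ y, if Y y ≤ (2:ℝ)^(k₁-k) then X x * Y y else 0)
        = X x * ∑ y, (if Y y ≤ (2:ℝ)^(k₁-k) then Y y else 0) := by
      intro x
      rw [Finset.mul_sum]
      apply Finset.sum_congr rfl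
      intro y _
      split <;> simp
    rw [Finset.sum_congr rfl (fun x _ => e1 x), ← Finset.sum_mul, hX1, one_mul]
    have e2 : (∑ y, (if Y y ≤ (2:ℝ)^(k₁-k) then Y y else 0))
        ≤ ∑ _y : Fin n → Bool, (2:ℝ)^(k₁-k) := by
      apply Finset.sum_le_sum
      intro y _
      split
      · assumption
      · exact (two_rpow_pos _).le
    calc (∑ y, (if Y y ≤ (2:ℝ)^(k₁-k) then Y y else 0)) ≤ _ := e2
      _ = ((Fintype.card (Fin n → Bool) : ℕ) : ℝ) * (2:ℝ)^(k₁-k) := by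
          rw [Finset.sum_const, nsmul_eq_mul, Finset.card_univ]
      _ = (2:ℝ)^((n:ℝ)+k₁-k) := by
          rw [hcard, ← Real.rpow_add (by norm_num)]
          congr 1; ring
  -- bound on E1
  have hE1 : prob W E1 ≤ (2:ℝ)^((n:ℝ) - k₂) := by
    set c : ℝ := ∑ y, if (2:ℝ)^(-τ) < Y y then (1:ℝ) else 0 with hcdef
    have hc : c ≤ (2:ℝ)^τ := by
      have h1 : c * (2:ℝ)^(-τ) ≤ 1 := by
        rw [hcdef, Finset.sum_mul]
        calc (∑ y, (if (2:ℝ)^(-τ) < Y y then (1:ℝ) else 0) * (2:ℝ)^(-τ))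
            ≤ ∑ y, Y y := by
              apply Finset.sum_le_sum
              intro y _
              split
              · rw [one_mul]; exact le_of_lt (by assumption)
              · rw [zero_mul]; exact hY0 y
          _ = 1 := hY1
      have h2 : (0:ℝ) < (2:ℝ)^(-τ) := two_rpow_pos _
      calc c ≤ 1 / (2:ℝ)^(-τ) := (le_div_iff₀ h2).mpr h1
        _ = (2:ℝ)^τ := by
            rw [Real.rpow_neg (by norm_num), one_div, inv_inv]
    have hstep : prob W E1 ≤ c * ((2:ℝ)^(n:ℝ) * (2:ℝ)^(-k)) := by
      simp only [prob, hE1def, Set.mem_setOf_eq, hWdef]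
      rw [Fintype.sum_prod_type, Finset.sum_comm]
      have e1 : ∀ y : Fin n → Bool,
          (∑ x, if (X x * Y y ≤ (2:ℝ)^(-k) ∧ (2:ℝ)^(-τ) < Y y) then X x * Y y else 0)
          ≤ (if (2:ℝ)^(-τ) < Y y then (1:ℝ) else 0) * ((2:ℝ)^(n:ℝ) * (2:ℝ)^(-k)) := by
        intro y
        by_cases hy : (2:ℝ)^(-τ) < Y y
        · rw [if_pos hy, one_mul]
          calc (∑ x, if (X x * Y y ≤ (2:ℝ)^(-k) ∧ (2:ℝ)^(-τ) < Y y) then X x * Y y else 0)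
              ≤ ∑ _x : Fin n → Bool, (2:ℝ)^(-k) := by
                apply Finset.sum_le_sum
                intro x _
                split
                · exact (by assumption : _ ∧ _).1
                · exact (two_rpow_pos _).le
            _ = ((Fintype.card (Fin n → Bool) : ℕ) : ℝ) * (2:ℝ)^(-k) := by
                rw [Finset.sum_const, nsmul_eq_mul, Finset.card_univ]
            _ = (2:ℝ)^(n:ℝ) * (2:ℝ)^(-k) := by rw [hcard]
        · rw [if_neg hy, zero_mul]
          have e0 : ∀ x : Fin n → Bool,
              (if (X x * Y y ≤ (2:ℝ)^(-k) ∧ (2:ℝ)^(-τ) < Y y) then X x * Y y else 0) = 0 := by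
            intro x
            rw [if_neg]
            rintro ⟨-, h⟩
            exact hy h
          simp [e0]
      calc (∑ y, ∑ x, if (X x * Y y ≤ (2:ℝ)^(-k) ∧ (2:ℝ)^(-τ) < Y y) then X x * Y y else 0)
          ≤ ∑ y, (if (2:ℝ)^(-τ) < Y y then (1:ℝ) else 0) * ((2:ℝ)^(n:ℝ) * (2:ℝ)^(-k)) :=
            Finset.sum_le_sum (fun y _ => e1 y)
        _ = c * ((2:ℝ)^(n:ℝ) * (2:ℝ)^(-k)) := by rw [hcdef, Finset.sum_mul]
    calc prob W E1 ≤ c * ((2:ℝ)^(n:ℝ) * (2:ℝ)^(-k)) := hstep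
      _ ≤ (2:ℝ)^τ * ((2:ℝ)^(n:ℝ) * (2:ℝ)^(-k)) := by
          apply mul_le_mul_of_nonneg_right hc
          positivity
      _ = (2:ℝ)^((n:ℝ) - k₂) := by
          rw [← Real.rpow_add (by norm_num), ← Real.rpow_add (by norm_num)]
          congr 1
          rw [hτdef]; ring
  -- bound on E2
  have hE2 : prob W E2 ≤ max ((2:ℝ)^(-(m:ℝ)) + ε) ((2:ℝ)^(-(k₁-k₀))) := by
    set p : ℝ := ∑ x, if X x ≤ (2:ℝ)^(-k₁) then X x else 0 with hpdef
    set q : ℝ := ∑ y, if Y y ≤ (2:ℝ)^(-τ) then Y y else 0 with hqdef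
    have hp0 : 0 ≤ p := Finset.sum_nonneg fun x _ => ite_nonneg'' (hX0 x)
    have hq0 : 0 ≤ q := Finset.sum_nonneg fun y _ => ite_nonneg'' (hY0 y)
    have hp1 : p ≤ 1 := by
      rw [hpdef, ← hX1]
      apply Finset.sum_le_sum
      intro x _
      split
      · exact le_rfl
      · exact hX0 x
    have hq1 : q ≤ 1 := by
      rw [hqdef, ← hY1]
      apply Finset.sum_le_sum
      intro y _
      split
      · exact le_rfl
      · exact hY0 y
    have hle_p : prob W E2 ≤ p := by
      simp only [prob, hE2def, Set.mem_setOf_eq, hWdef]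
      calc (∑ a : (Fin n → Bool) × (Fin n → Bool),
            if (X a.1 ≤ (2:ℝ)^(-k₁) ∧ Y a.2 ≤ (2:ℝ)^(-τ) ∧ Ext a = z) then X a.1 * Y a.2 else 0)
          ≤ ∑ a : (Fin n → Bool) × (Fin n → Bool),
            (if X a.1 ≤ (2:ℝ)^(-k₁) then X a.1 else 0) * Y a.2 := by
            apply Finset.sum_le_sum
            intro a _
            by_cases h : (X a.1 ≤ (2:ℝ)^(-k₁) ∧ Y a.2 ≤ (2:ℝ)^(-τ) ∧ Ext a = z)
            · rw [if_pos h, if_pos h.1]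
            · rw [if_neg h]
              exact mul_nonneg (ite_nonneg'' (hX0 _)) (hY0 _)
        _ = (∑ x, if X x ≤ (2:ℝ)^(-k₁) then X x else 0) * ∑ y, Y y :=
            sum_prod_mul (fun x => if X x ≤ (2:ℝ)^(-k₁) then X x else 0) Y
        _ = p := by rw [hY1, mul_one, hpdef]
    have hle_q : prob W E2 ≤ q := by
      simp only [prob, hE2def, Set.mem_setOf_eq, hWdef]
      calc (∑ a : (Fin n → Bool) × (Fin n → Bool),
            if (X a.1 ≤ (2:ℝ)^(-k₁) ∧ Y a.2 ≤ (2:ℝ)^(-τ) ∧ Ext a = z) then X a.1 * Y a.2 else 0)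
          ≤ ∑ a : (Fin n → Bool) × (Fin n → Bool),
            X a.1 * (if Y a.2 ≤ (2:ℝ)^(-τ) then Y a.2 else 0) := by
            apply Finset.sum_le_sum
            intro a _
            by_cases h : (X a.1 ≤ (2:ℝ)^(-k₁) ∧ Y a.2 ≤ (2:ℝ)^(-τ) ∧ Ext a = z)
            · rw [if_pos h, if_pos h.2.1]
            · rw [if_neg h]
              exact mul_nonneg (hX0 _) (ite_nonneg'' (hY0 _))
        _ = (∑ x, X x) * ∑ y, (if Y y ≤ (2:ℝ)^(-τ) then Y y else 0) :=
            sum_prod_mul X (fun y => if Y y ≤ (2:ℝ)^(-τ) then Y y else 0)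
        _ = q := by rw [hX1, one_mul, hqdef]
    rcases le_or_gt p ((2:ℝ)^(k₀-k₁)) with hp | hp
    · apply le_trans (hle_p.trans hp)
      apply le_trans _ (le_max_right _ _)
      apply le_of_eq
      congr 1; ring
    rcases le_or_gt q ((2:ℝ)^(k₀-τ)) with hq | hq
    · apply le_trans (hle_q.trans hq)
      apply le_trans _ (le_max_right _ _)
      apply Real.rpow_le_rpow_of_exponent_le (by norm_num)
      rw [hτdef]; linarith
    -- main case: apply the extractor
    have hppos : 0 < p := (two_rpow_pos _).trans hp
    have hqpos : 0 < q := (two_rpow_pos _).trans hq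
    set X' : (Fin n → Bool) → ℝ := fun x => (if X x ≤ (2:ℝ)^(-k₁) then X x else 0) / p
      with hX'def
    set Y' : (Fin n → Bool) → ℝ := fun y => (if Y y ≤ (2:ℝ)^(-τ) then Y y else 0) / q
      with hY'def
    have hX'sum : ∑ x, X' x = 1 := by
      rw [hX'def, ← Finset.sum_div, ← hpdef, div_self hppos.ne']
    have hY'sum : ∑ y, Y' y = 1 := by
      rw [hY'def, ← Finset.sum_div, ← hqdef, div_self hqpos.ne']
    have hX'dist : IsDist X' :=
      ⟨fun x => div_nonneg (ite_nonneg'' (hX0 x)) hppos.le, hX'sum⟩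
    have hY'dist : IsDist Y' :=
      ⟨fun y => div_nonneg (ite_nonneg'' (hY0 y)) hqpos.le, hY'sum⟩
    have hX'ent : MinEntropyGE X' k₀ := by
      intro x
      have h1 : (if X x ≤ (2:ℝ)^(-k₁) then X x else 0) ≤ (2:ℝ)^(-k₁) := by
        split
        · assumption
        · exact (two_rpow_pos _).le
      have h2 : X' x ≤ (2:ℝ)^(-k₁) / p := (div_le_div_iff_of_pos_right hppos).mpr h1
      calc X' x ≤ (2:ℝ)^(-k₁) / p := h2
        _ ≤ (2:ℝ)^(-k₁) / (2:ℝ)^(k₀-k₁) := by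
            apply div_le_div_of_nonneg_left (two_rpow_pos _).le (two_rpow_pos _) hp.le
        _ = (2:ℝ)^(-k₀) := by
            rw [← Real.rpow_sub (by norm_num)]
            congr 1; ring
    have hY'ent : MinEntropyGE Y' k₀ := by
      intro y
      have h1 : (if Y y ≤ (2:ℝ)^(-τ) then Y y else 0) ≤ (2:ℝ)^(-τ) := by
        split
        · assumption
        · exact (two_rpow_pos _).le
      have h2 : Y' y ≤ (2:ℝ)^(-τ) / q := (div_le_div_iff_of_pos_right hqpos).mpr h1
      calc Y' y ≤ (2:ℝ)^(-τ) / q := h2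
        _ ≤ (2:ℝ)^(-τ) / (2:ℝ)^(k₀-τ) := by
            apply div_le_div_of_nonneg_left (two_rpow_pos _).le (two_rpow_pos _) hq.le
        _ = (2:ℝ)^(-k₀) := by
            rw [← Real.rpow_sub (by norm_num)]
            congr 1; ring
    have htv := hExt X' Y' hX'dist hY'dist hX'ent hY'ent
    -- sums of push and unif
    have hPsum : ∑ b, push Ext (fun pr => X' pr.1 * Y' pr.2) b = 1 := by
      simp only [push]
      rw [Finset.sum_comm]
      have e1 : ∀ a : (Fin n → Bool) × (Fin n → Bool),
          (∑ b, if Ext a = b then X' a.1 * Y' a.2 else 0) = X' a.1 * Y' a.2 := by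
        intro a
        simp [Finset.sum_ite_eq]
      rw [Finset.sum_congr rfl (fun a _ => e1 a), sum_prod_mul, hX'sum, hY'sum, one_mul]
    have hQsum : ∑ b : Fin m → Bool, unif (Fin m → Bool) b = 1 := by
      simp only [unif, Finset.sum_const, Finset.card_univ, nsmul_eq_mul]
      rw [mul_inv_cancel₀]
      exact_mod_cast Fintype.card_ne_zero
    have hzle := tv_point (push Ext (fun pr => X' pr.1 * Y' pr.2)) (unif (Fin m → Bool))
      (hPsum.trans hQsum.symm) z
    have hunifz : unif (Fin m → Bool) z = (2:ℝ)^(-(m:ℝ)) := by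
      simp only [unif]
      rw [show Fintype.card (Fin m → Bool) = 2^m by simp]
      rw [Real.rpow_neg (by norm_num), Real.rpow_natCast]
      push_cast
      rfl
    have hpushz_nn : 0 ≤ push Ext (fun pr => X' pr.1 * Y' pr.2) z := by
      apply Finset.sum_nonneg
      intro a _
      split
      · exact mul_nonneg (hX'dist.1 _) (hY'dist.1 _)
      · exact le_rfl
    have hpushz : push Ext (fun pr => X' pr.1 * Y' pr.2) z ≤ (2:ℝ)^(-(m:ℝ)) + ε := by
      calc push Ext (fun pr => X' pr.1 * Y' pr.2) z
          ≤ unif (Fin m → Bool) z + tv (push Ext (fun pr => X' pr.1 * Y' pr.2))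
              (unif (Fin m → Bool)) := hzle
        _ ≤ (2:ℝ)^(-(m:ℝ)) + ε := by rw [hunifz]; linarith
    -- prob W E2 = p * q * push z
    have hE2eq : prob W E2 = p * q * push Ext (fun pr => X' pr.1 * Y' pr.2) z := by
      simp only [prob, hE2def, Set.mem_setOf_eq, hWdef, push]
      rw [Finset.mul_sum]
      apply Finset.sum_congr rfl
      intro a _
      have hX'v : X' a.1 = (if X a.1 ≤ (2:ℝ)^(-k₁) then X a.1 else 0) / p := rfl
      have hY'v : Y' a.2 = (if Y a.2 ≤ (2:ℝ)^(-τ) then Y a.2 else 0) / q := rfl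
      by_cases h3 : Ext a = z
      · simp only [if_pos h3, hX'v, hY'v]
        by_cases h1 : X a.1 ≤ (2:ℝ)^(-k₁)
        · by_cases h2 : Y a.2 ≤ (2:ℝ)^(-τ)
          · rw [if_pos (⟨h1, h2, h3⟩ : _ ∧ _ ∧ _), if_pos h1, if_pos h2]
            field_simp
          · rw [if_neg (fun h => h2 h.2.1), if_neg h2]
            simp
        · rw [if_neg (fun h => h1 h.1), if_neg h1]
          simp
      · simp only [if_neg h3, mul_zero]
        rw [if_neg (fun h => h3 h.2.2)]
    calc prob W E2 = p * q * push Ext (fun pr => X' pr.1 * Y' pr.2) z := hE2eq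
      _ ≤ 1 * ((2:ℝ)^(-(m:ℝ)) + ε) := by
          apply mul_le_mul (by nlinarith) hpushz hpushz_nn (by norm_num)
      _ = (2:ℝ)^(-(m:ℝ)) + ε := one_mul _
      _ ≤ max ((2:ℝ)^(-(m:ℝ)) + ε) ((2:ℝ)^(-(k₁-k₀))) := le_max_left _ _
  -- final combination
  have hfinal : (2:ℝ)^((n:ℝ)-k₂) + (2:ℝ)^((n:ℝ)+k₁-k) ≤ (2:ℝ)^(-(k₂-(n:ℝ)-1)) := by
    have h1 : (2:ℝ)^((n:ℝ)+k₁-k) ≤ (2:ℝ)^((n:ℝ)-k₂) :=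
      Real.rpow_le_rpow_of_exponent_le (by norm_num) (by linarith)
    have h2 : (2:ℝ)^(-(k₂-(n:ℝ)-1)) = 2 * (2:ℝ)^((n:ℝ)-k₂) := by
      rw [show -(k₂-(n:ℝ)-1) = 1 + ((n:ℝ)-k₂) by ring, Real.rpow_add (by norm_num),
        Real.rpow_one]
    linarith
  linarith
end

section
/- There exists a universal constant C > 0 such that the following holds. If 𝒳 is a class of probability distributions on {0,1}^n with |𝒳| = M and M ≥ 2, then there exists a nonempty subset S ⊆ {0,1}^n such that the uniform distribution D on S satisfies TV(X, D) ≥ 1 − C·(log₂(M)/2^n)^{1/3} for every X ∈ 𝒳. -/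
open Finset

lemma aux_exp_le (u : ℝ) (h0 : 0 ≤ u) (h1 : u ≤ 1) : Real.exp u ≤ 1 + 2 * u := by
  have hc := convexOn_exp.2 (Set.mem_univ (0:ℝ)) (Set.mem_univ (1:ℝ))
      (by linarith : (0:ℝ) ≤ 1 - u) h0 (by ring)
  simp only [smul_eq_mul, mul_zero, mul_one, zero_add, Real.exp_zero] at hc
  have he : Real.exp 1 < 2.7182818286 := Real.exp_one_lt_d9
  nlinarith

lemma aux_abs (a b : ℝ) : |a - b| = a + b - 2 * min a b := by
  rcases le_total a b with h | h
  · rw [abs_of_nonpos (by linarith), min_eq_left h]; ring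
  · rw [abs_of_nonneg (by linarith), min_eq_right h]; ring

lemma expect_prod {α : Type*} [Fintype α] [DecidableEq α] (p : ℝ) (g : α → ℝ) :
    ∑ S ∈ Finset.univ.powerset (α := α),
      p ^ S.card * (1 - p) ^ (Fintype.card α - S.card) * ∏ x ∈ S, g x
      = ∏ x, (p * g x + (1 - p)) := by
  rw [Finset.prod_add]
  refine Finset.sum_congr rfl fun S hS => ?_
  have h1 : ∏ x ∈ S, (p * g x) = p ^ S.card * ∏ x ∈ S, g x := by
    rw [Finset.prod_mul_distrib, Finset.prod_const]
  have h2 : ∏ x ∈ Finset.univ \ S, (1 - p) = (1 - p) ^ (Fintype.card α - S.card) := by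
    rw [Finset.prod_const, Finset.card_sdiff_of_subset (Finset.mem_powerset.mp hS), Finset.card_univ]
  rw [h1, h2]; ring

lemma tv_eq {α : Type*} [Fintype α] [DecidableEq α] (X : α → ℝ) (hX : IsDist X) (S : Finset α)
    (hS : S.Nonempty) :
    tv X (fun x => if x ∈ S then ((S.card : ℝ))⁻¹ else 0)
      = 1 - ∑ x ∈ S, min (X x) ((S.card : ℝ))⁻¹ := by
  classical
  have hc : (S.card : ℝ) ≠ 0 := Nat.cast_ne_zero.mpr hS.card_pos.ne'
  set c : ℝ := ((S.card : ℝ))⁻¹ with hcdef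
  have hD : ∑ x, (if x ∈ S then c else 0) = 1 := by
    rw [Finset.sum_ite_mem, Finset.univ_inter, Finset.sum_const, nsmul_eq_mul]
    rw [hcdef]; exact mul_inv_cancel₀ hc
  have hmin : ∑ x, min (X x) (if x ∈ S then c else 0) = ∑ x ∈ S, min (X x) c := by
    have h : ∀ x, min (X x) (if x ∈ S then c else 0) = if x ∈ S then min (X x) c else 0 := by
      intro x; split
      · rfl
      · exact min_eq_right (hX.1 x)
    simp_rw [h]
    rw [Finset.sum_ite_mem, Finset.univ_inter]
  simp only [tv]
  have habs : ∑ x, |X x - (if x ∈ S then c else 0)|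
      = ∑ x, (X x + (if x ∈ S then c else 0) - 2 * min (X x) (if x ∈ S then c else 0)) :=
    Finset.sum_congr rfl fun x _ => aux_abs _ _
  rw [habs, Finset.sum_sub_distrib, Finset.sum_add_distrib, ← Finset.mul_sum, hX.2, hD, hmin]
  ring


set_option maxHeartbeats 1000000 in
theorem stmt18 : ∃ C : ℝ, 0 < C ∧
    ∀ (n M : ℕ) (𝒳 : Finset ((Fin n → Bool) → ℝ)),
      𝒳.card = M → 2 ≤ M → (∀ X ∈ 𝒳, IsDist X) →
      ∃ S : Finset (Fin n → Bool), S.Nonempty ∧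
        ∀ X ∈ 𝒳,
          1 - C * (Real.logb 2 M / (2 : ℝ) ^ n) ^ ((1 : ℝ) / 3)
            ≤ tv X (fun x => if x ∈ S then ((S.card : ℝ))⁻¹ else 0) := by
  classical
  refine ⟨100, by norm_num, ?_⟩
  intro n M 𝒳 hMcard hM2 hdist
  set t : ℝ := Real.logb 2 M with htdef
  have hNpos : (0:ℝ) < 2 ^ n := by positivity
  have hN1 : (1:ℝ) ≤ 2 ^ n := one_le_pow₀ (by norm_num : (1:ℝ) ≤ 2)
  have ht1 : 1 ≤ t := by
    have : Real.logb 2 2 ≤ Real.logb 2 M :=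
      Real.logb_le_logb_of_le (by norm_num) (by norm_num) (by exact_mod_cast hM2)
    simpa [Real.logb_self_eq_one] using this
  set u : ℝ := t / 2 ^ n with hudef
  set v : ℝ := u ^ ((1:ℝ)/3) with hvdef
  have hu_pos : 0 < u := div_pos (by linarith) hNpos
  have hv_pos : 0 < v := Real.rpow_pos_of_pos hu_pos _
  by_cases hcase : 1 ≤ 100 * v
  · refine ⟨{fun _ => false}, Finset.singleton_nonempty _, fun X hX => ?_⟩
    have h0 : 0 ≤ tv X (fun x => if x ∈ ({fun _ => false} : Finset (Fin n → Bool)) then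
        ((({fun _ => false} : Finset (Fin n → Bool)).card : ℝ))⁻¹ else 0) := by
      apply div_nonneg _ (by norm_num)
      exact Finset.sum_nonneg fun x _ => abs_nonneg _
    linarith
  push_neg at hcase
  -- now v < 1/100
  have hv : v < 1/100 := by linarith
  have hu_eq : v ^ (3:ℕ) = u := by
    rw [hvdef, ← Real.rpow_natCast (u ^ ((1:ℝ)/3)) 3, ← Real.rpow_mul hu_pos.le]
    norm_num
  have hu_small : u < 1/1000000 := by
    have := pow_lt_pow_left₀ hv hv_pos.le (n := 3) (by norm_num)
    rw [← hu_eq]; norm_num at this ⊢; linarith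
  have hu_le_one : u ≤ 1 := by linarith
  set r : ℝ := Real.sqrt u with hrdef
  have hr_sq : r * r = u := Real.mul_self_sqrt hu_pos.le
  have hr_pos : 0 < r := Real.sqrt_pos.mpr hu_pos
  have hrv : r ≤ v := by
    rw [hrdef, Real.sqrt_eq_rpow, hvdef]
    exact Real.rpow_le_rpow_of_exponent_ge hu_pos hu_le_one (by norm_num)
  have hNu : (2:ℝ) ^ n * u = t := by
    rw [hudef]; field_simp
  have huN : 1 / (2:ℝ)^n ≤ u := by
    rw [hudef]; gcongr
  have hNbig : (1000000:ℝ) < 2 ^ n := by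
    have h1 : 1 / (2:ℝ)^n < 1/1000000 := lt_of_le_of_lt huN hu_small
    have := (div_lt_div_iff₀ hNpos (by norm_num : (0:ℝ) < 1000000)).mp h1
    linarith
  have hrN : 1 / (2:ℝ)^n ≤ r := by
    nlinarith [hr_pos, hr_sq, huN, hNpos, hN1]
  -- the candidate size
  set s₀ : ℕ := ⌈Real.sqrt (2 ^ n * t)⌉₊ with hs₀def
  have hsqrt_eq : Real.sqrt (2 ^ n * t) = 2 ^ n * r := by
    rw [← hNu, hrdef, show (2:ℝ) ^ n * (2 ^ n * u) = ((2:ℝ) ^ n) ^ 2 * u by ring,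
      Real.sqrt_mul (by positivity), Real.sqrt_sq hNpos.le]
  have hs₀l : 2 ^ n * r ≤ (s₀ : ℝ) := hsqrt_eq ▸ Nat.le_ceil _
  have hs₀u : (s₀ : ℝ) ≤ 2 ^ n * r + 1 := by
    rw [← hsqrt_eq]
    exact (Nat.ceil_lt_add_one (by positivity : (0:ℝ) ≤ Real.sqrt (2 ^ n * t))).le
  have hs1000 : (1000:ℝ) ≤ (s₀ : ℝ) := by
    refine le_trans ?_ hs₀l
    nlinarith [hr_sq, huN, hNbig, mul_pos hNpos hr_pos, hr_pos, hNpos]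
  have hs₀pos : 0 < (s₀ : ℝ) := by linarith
  set p : ℝ := 2 * s₀ / 2 ^ n with hpdef
  have hp_pos : 0 < p := by positivity
  have hp_le : p ≤ 4 * r := by
    rw [hpdef, div_le_iff₀ hNpos]
    nlinarith [hs₀u, hrN, hNpos]
  have hp_half : p ≤ 1 / 2 := by linarith [hp_le, hrv, hv]
  have hpN : p * 2 ^ n / 2 = (s₀ : ℝ) := by
    rw [hpdef]; field_simp
  set Y : ((Fin n → Bool) → ℝ) → (Fin n → Bool) → ℝ :=
    fun X x => min (X x) ((s₀ : ℝ))⁻¹ with hYdef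
  have hY0 : ∀ X ∈ 𝒳, ∀ x, 0 ≤ Y X x := fun X hX x =>
    le_min ((hdist X hX).1 x) (by positivity)
  have hYle : ∀ X, ∀ x, Y X x ≤ ((s₀:ℝ))⁻¹ := fun X x => min_le_right _ _
  have hYsum : ∀ X ∈ 𝒳, ∑ x, Y X x ≤ 1 := by
    intro X hX
    calc ∑ x, Y X x ≤ ∑ x, X x := Finset.sum_le_sum fun x _ => min_le_left _ _
    _ = 1 := (hdist X hX).2
  set A : ℝ := 4 * M * Real.exp (2 * p * s₀) with hAdef
  have hA_pos : 0 < A := by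
    have : (0:ℝ) < M := by exact_mod_cast lt_of_lt_of_le (by norm_num) hM2
    positivity
  set w : Finset (Fin n → Bool) → ℝ :=
    fun S => p ^ S.card * (1 - p) ^ (Fintype.card (Fin n → Bool) - S.card) with hwdef
  have hw_pos : ∀ S, 0 < w S := fun S => by
    have : (0:ℝ) < 1 - p := by linarith
    positivity
  set F : Finset (Fin n → Bool) → ℝ :=
    fun S => (∑ X ∈ 𝒳, Real.exp (s₀ * ∑ x ∈ S, Y X x)) + A * 2 ^ s₀ * (2:ℝ)⁻¹ ^ S.card
    with hFdef
  -- expectation of each exponential term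
  have hE1 : ∀ X ∈ 𝒳, ∑ S ∈ Finset.univ.powerset, w S * Real.exp (s₀ * ∑ x ∈ S, Y X x)
      = ∏ x, (p * Real.exp (s₀ * Y X x) + (1 - p)) := by
    intro X hX
    rw [← expect_prod p (fun x => Real.exp (s₀ * Y X x))]
    refine Finset.sum_congr rfl fun S _ => ?_
    rw [Finset.mul_sum, Real.exp_sum]
  have hE2 : ∑ S ∈ Finset.univ.powerset, w S * (2:ℝ)⁻¹ ^ S.card
      = (1 - p / 2) ^ Fintype.card (Fin n → Bool) := by
    have := expect_prod p (fun _ : Fin n → Bool => (2:ℝ)⁻¹)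
    rw [Finset.prod_const, Finset.card_univ] at this
    rw [show (1 - p/2 : ℝ) = p * (2:ℝ)⁻¹ + (1 - p) by ring, ← this]
    refine Finset.sum_congr rfl fun S _ => ?_
    rw [Finset.prod_const]
  have hE3 : ∑ S ∈ Finset.univ.powerset, w S = 1 := by
    have := expect_prod p (fun _ : Fin n → Bool => (1:ℝ))
    simp only [Finset.prod_const, one_pow, mul_one] at this
    rw [this]
    simp
  -- MGF bound per distribution
  have hprod : ∀ X ∈ 𝒳, ∏ x, (p * Real.exp (s₀ * Y X x) + (1 - p))
      ≤ Real.exp (2 * p * s₀) := by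
    intro X hX
    have hfac : ∀ x, p * Real.exp (s₀ * Y X x) + (1 - p)
        ≤ Real.exp (2 * p * s₀ * Y X x) := by
      intro x
      have hu0 : 0 ≤ (s₀:ℝ) * Y X x := mul_nonneg hs₀pos.le (hY0 X hX x)
      have hu1 : (s₀:ℝ) * Y X x ≤ 1 := by
        calc (s₀:ℝ) * Y X x ≤ (s₀:ℝ) * ((s₀:ℝ))⁻¹ :=
              mul_le_mul_of_nonneg_left (hYle X x) hs₀pos.le
        _ = 1 := mul_inv_cancel₀ hs₀pos.ne'
      have h1 := aux_exp_le _ hu0 hu1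
      have h2 : 1 + p * (2 * ((s₀:ℝ) * Y X x)) ≤ Real.exp (2 * p * s₀ * Y X x) := by
        have := Real.add_one_le_exp (2 * p * (s₀:ℝ) * Y X x)
        linarith [this]
      have h3 : p * Real.exp ((s₀:ℝ) * Y X x) ≤ p * (1 + 2 * ((s₀:ℝ) * Y X x)) :=
        mul_le_mul_of_nonneg_left h1 hp_pos.le
      linarith [h2, h3]
    calc ∏ x, (p * Real.exp (s₀ * Y X x) + (1 - p))
        ≤ ∏ x, Real.exp (2 * p * s₀ * Y X x) := by
          refine Finset.prod_le_prod (fun x _ => ?_) (fun x _ => hfac x)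
          have h4 : 0 ≤ p * Real.exp ((s₀:ℝ) * Y X x) :=
            mul_nonneg hp_pos.le (Real.exp_pos _).le
          linarith [hp_half]
      _ = Real.exp (∑ x, 2 * p * s₀ * Y X x) := (Real.exp_sum _ _).symm
      _ ≤ Real.exp (2 * p * s₀) := by
          rw [Real.exp_le_exp]
          calc ∑ x, 2 * p * (s₀:ℝ) * Y X x = 2 * p * s₀ * ∑ x, Y X x := by
                rw [Finset.mul_sum]
          _ ≤ 2 * p * s₀ * 1 := by
                refine mul_le_mul_of_nonneg_left (hYsum X hX) (by positivity)
          _ = 2 * p * s₀ := mul_one _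
  -- penalty expectation is tiny
  have hcardα : (Fintype.card (Fin n → Bool) : ℝ) = 2 ^ n := by
    simp [Fintype.card_fun]
  have kpen : (2:ℝ) ^ s₀ * (1 - p / 2) ^ Fintype.card (Fin n → Bool) ≤ 1 / 4 := by
    set N' : ℕ := Fintype.card (Fin n → Bool) with hN'def
    have hexp1 : (1 - p / 2 : ℝ) ≤ Real.exp (-(p/2)) := by
      have := Real.add_one_le_exp (-(p/2))
      linarith
    have hstep1 : (1 - p / 2 : ℝ) ^ N' ≤ Real.exp (-(p/2)) ^ N' :=
      pow_le_pow_left₀ (by linarith : (0:ℝ) ≤ 1 - p / 2) hexp1 N'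
    have hstep2 : Real.exp (-(p/2)) ^ N' = Real.exp (-(s₀:ℝ)) := by
      rw [← Real.exp_nat_mul, ← hpN]
      congr 1
      rw [hcardα]
      ring
    have hstep3 : (2:ℝ) ^ s₀ * Real.exp (-(s₀:ℝ)) = (2 * Real.exp (-1)) ^ s₀ := by
      rw [mul_pow]
      congr 1
      rw [← Real.exp_nat_mul]
      congr 1
      ring
    have hstep4 : (2 * Real.exp (-1) : ℝ) ≤ 3 / 4 := by
      have h1 : (2.7182818283 : ℝ) < Real.exp 1 := Real.exp_one_gt_d9
      rw [Real.exp_neg]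
      rw [show (2 : ℝ) * (Real.exp 1)⁻¹ = 2 / Real.exp 1 by ring]
      rw [div_le_iff₀ (Real.exp_pos 1)]
      nlinarith
    have hs5 : 5 ≤ s₀ := by exact_mod_cast (by linarith : (5:ℝ) ≤ (s₀:ℝ))
    calc (2:ℝ) ^ s₀ * (1 - p / 2) ^ N' ≤ (2:ℝ) ^ s₀ * Real.exp (-(s₀:ℝ)) := by
          rw [← hstep2]
          exact mul_le_mul_of_nonneg_left hstep1 (by positivity)
      _ = (2 * Real.exp (-1)) ^ s₀ := hstep3
      _ ≤ (3/4 : ℝ) ^ s₀ := pow_le_pow_left₀ (by positivity) hstep4 _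
      _ ≤ (3/4 : ℝ) ^ 5 := pow_le_pow_of_le_one (by norm_num) (by norm_num) hs5
      _ ≤ 1 / 4 := by norm_num
  have hMpos : (0:ℝ) < M := by exact_mod_cast lt_of_lt_of_le (by norm_num) hM2
  have hs₀1 : 1 ≤ s₀ := by exact_mod_cast (by linarith : (1:ℝ) ≤ (s₀:ℝ))
  -- expected value of F is small
  have hEF : ∑ S ∈ Finset.univ.powerset, w S * F S ≤ 2 * M * Real.exp (2 * p * s₀) := by
    have hsplit : ∑ S ∈ Finset.univ.powerset, w S * F S
        = (∑ X ∈ 𝒳, ∑ S ∈ Finset.univ.powerset, w S * Real.exp (s₀ * ∑ x ∈ S, Y X x))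
          + A * 2 ^ s₀ * ∑ S ∈ Finset.univ.powerset, w S * (2:ℝ)⁻¹ ^ S.card := by
      simp only [hFdef, mul_add, Finset.sum_add_distrib]
      congr 1
      · simp only [Finset.mul_sum]
        exact Finset.sum_comm
      · rw [Finset.mul_sum]
        exact Finset.sum_congr rfl fun S _ => by ring
    rw [hsplit, hE2]
    have h1 : ∑ X ∈ 𝒳, ∑ S ∈ Finset.univ.powerset, w S * Real.exp (s₀ * ∑ x ∈ S, Y X x)
        ≤ ∑ _X ∈ 𝒳, Real.exp (2 * p * s₀) := by
      refine Finset.sum_le_sum fun X hX => ?_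
      rw [hE1 X hX]
      exact hprod X hX
    have h1' : ∑ _X ∈ 𝒳, Real.exp (2 * p * s₀) = M * Real.exp (2 * p * s₀) := by
      rw [Finset.sum_const, hMcard, nsmul_eq_mul]
    have h2 : A * 2 ^ s₀ * (1 - p / 2) ^ Fintype.card (Fin n → Bool)
        ≤ M * Real.exp (2 * p * s₀) := by
      calc A * 2 ^ s₀ * (1 - p / 2) ^ Fintype.card (Fin n → Bool)
          = A * (2 ^ s₀ * (1 - p / 2) ^ Fintype.card (Fin n → Bool)) := by ring
        _ ≤ A * (1/4) := mul_le_mul_of_nonneg_left kpen hA_pos.le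
        _ = M * Real.exp (2 * p * s₀) := by rw [hAdef]; ring
    linarith
  -- find a good subset S
  have hex : ∃ S ∈ Finset.univ.powerset (α := Fin n → Bool),
      w S * F S ≤ w S * (2 * M * Real.exp (2 * p * s₀)) := by
    apply Finset.exists_le_of_sum_le ⟨∅, Finset.empty_mem_powerset _⟩
    calc ∑ S ∈ Finset.univ.powerset, w S * F S ≤ 2 * M * Real.exp (2 * p * s₀) := hEF
      _ = ∑ S ∈ Finset.univ.powerset, w S * (2 * M * Real.exp (2 * p * s₀)) := by
          rw [← Finset.sum_mul, hE3, one_mul]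
  obtain ⟨S, _, hwF⟩ := hex
  have hFS : F S ≤ 2 * M * Real.exp (2 * p * s₀) :=
    le_of_mul_le_mul_left hwF (hw_pos S)
  have hsum_exp_nonneg : 0 ≤ ∑ X ∈ 𝒳, Real.exp (s₀ * ∑ x ∈ S, Y X x) :=
    Finset.sum_nonneg fun X _ => (Real.exp_pos _).le
  -- S has at least s₀ elements
  have hcardS : s₀ ≤ S.card := by
    by_contra hlt
    push_neg at hlt
    have h2p : (2:ℝ) ^ (S.card + 1) ≤ 2 ^ s₀ := pow_le_pow_right₀ (by norm_num) hlt
    have hpen2 : ((2:ℝ)) ^ (S.card + 1) * (2⁻¹) ^ S.card = 2 := by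
      rw [pow_succ, mul_comm ((2:ℝ) ^ S.card) 2, mul_assoc, ← mul_pow]
      norm_num
    have hpen : A * 2 ≤ A * 2 ^ s₀ * (2:ℝ)⁻¹ ^ S.card := by
      calc A * 2 = A * ((2:ℝ) ^ (S.card + 1) * (2⁻¹) ^ S.card) := by rw [hpen2]
        _ = A * (2:ℝ) ^ (S.card + 1) * (2⁻¹) ^ S.card := by ring
        _ ≤ A * 2 ^ s₀ * (2:ℝ)⁻¹ ^ S.card := by
            have : A * (2:ℝ) ^ (S.card + 1) ≤ A * 2 ^ s₀ :=
              mul_le_mul_of_nonneg_left h2p hA_pos.le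
            exact mul_le_mul_of_nonneg_right this (by positivity)
    have hFge : A * 2 ≤ F S := by
      rw [hFdef]
      dsimp only
      linarith
    rw [hAdef] at hFge
    have hpos : 0 < (M:ℝ) * Real.exp (2 * p * s₀) := mul_pos hMpos (Real.exp_pos _)
    linarith [hFge, hFS, hpos]
  have hSne : S.Nonempty := Finset.card_pos.mp (lt_of_lt_of_le hs₀1 hcardS)
  refine ⟨S, hSne, fun X hX => ?_⟩
  -- extract the per-distribution bound
  have hterm : Real.exp (s₀ * ∑ x ∈ S, Y X x) ≤ 2 * M * Real.exp (2 * p * s₀) := by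
    refine le_trans ?_ hFS
    rw [hFdef]
    dsimp only
    have hp1 : 0 ≤ A * 2 ^ s₀ * (2:ℝ)⁻¹ ^ S.card := by positivity
    have hp2 : Real.exp ((s₀:ℝ) * ∑ x ∈ S, Y X x)
        ≤ ∑ X' ∈ 𝒳, Real.exp ((s₀:ℝ) * ∑ x ∈ S, Y X' x) :=
      Finset.single_le_sum (f := fun X' => Real.exp ((s₀:ℝ) * ∑ x ∈ S, Y X' x))
        (fun X' _ => (Real.exp_pos _).le) hX
    linarith
  have hterm2 : (s₀:ℝ) * ∑ x ∈ S, Y X x ≤ Real.log (2 * M) + 2 * p * s₀ := by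
    have heq : 2 * (M:ℝ) * Real.exp (2 * p * s₀)
        = Real.exp (Real.log (2 * M) + 2 * p * s₀) := by
      rw [Real.exp_add, Real.exp_log (by positivity)]
    rw [heq] at hterm
    exact Real.exp_le_exp.mp hterm
  have hlogM : Real.log M = t * Real.log 2 := by
    rw [htdef, Real.logb]
    field_simp
  have hlog2M : Real.log (2 * M) ≤ 2 * t := by
    rw [Real.log_mul (by norm_num) (by positivity), hlogM]
    have hl2 : Real.log 2 < 0.6931471808 := Real.log_two_lt_d9
    have hl2' : 0 < Real.log 2 := Real.log_pos (by norm_num)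
    have h8 : t * Real.log 2 ≤ t * 0.6931471808 :=
      mul_le_mul_of_nonneg_left hl2.le (by linarith)
    linarith
  have ht_rs : t ≤ r * s₀ := by
    have h9 : 2 ^ n * r * r ≤ (s₀:ℝ) * r := mul_le_mul_of_nonneg_right hs₀l hr_pos.le
    have h10 : t = 2 ^ n * r * r := by rw [← hNu, ← hr_sq]; ring
    linarith
  have hYS : ∑ x ∈ S, Y X x ≤ 2 * r + 2 * p := by
    have h5 : (s₀:ℝ) * ∑ x ∈ S, Y X x ≤ (s₀:ℝ) * (2 * r + 2 * p) := by
      calc (s₀:ℝ) * ∑ x ∈ S, Y X x ≤ Real.log (2 * M) + 2 * p * s₀ := hterm2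
        _ ≤ 2 * t + 2 * p * s₀ := by linarith
        _ ≤ (s₀:ℝ) * (2 * r + 2 * p) := by linarith [ht_rs]
    exact le_of_mul_le_mul_left h5 hs₀pos
  have hmin_le : ∑ x ∈ S, min (X x) ((S.card : ℝ))⁻¹ ≤ ∑ x ∈ S, Y X x := by
    refine Finset.sum_le_sum fun x _ => ?_
    rw [hYdef]
    dsimp only
    refine min_le_min (le_refl _) ?_
    exact inv_anti₀ hs₀pos (by exact_mod_cast hcardS)
  rw [tv_eq X (hdist X hX) S hSne]
  have : ∑ x ∈ S, min (X x) ((S.card : ℝ))⁻¹ ≤ 100 * v := by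
    calc ∑ x ∈ S, min (X x) ((S.card : ℝ))⁻¹ ≤ 2 * r + 2 * p := le_trans hmin_le hYS
      _ ≤ 10 * r := by linarith [hp_le, hr_pos]
      _ ≤ 100 * v := by linarith [hrv, hv_pos, hr_pos]
  linarith
end
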